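/- arXiv:1311.4374 — 7 statements merged into one kernel-verified Lean document; each statement's English description precedes it below -/
import Mathlib

section
/- Let D be a unital complex C*-algebra and let C₁, C₂ ∈ D be such that, for i = 1, 2, Aᵢ := Cᵢ*Cᵢ and Bᵢ := CᵢCᵢ* are projections with Aᵢ + Bᵢ = 1. Let P and Q be projections in D and let X ∈ D satisfy X*X = P and XX* = Q. Assume C₁ commutes with each of X, X*, P, Q, and C₂ commutes with each of X, X*, P, Q, C₁, C₁*. Then there exists a unitary U of D, connected to 1 by a continuous path within the unitary group of D, such that U(A₂A₁P)U* = A₂A₁Q. -/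
/-- Two elements of an algebra with star and topology are connected by a continuous
path within the unitary group. -/
def UnitaryPath {D : Type*} [Monoid D] [StarMul D] [TopologicalSpace D] (u v : D) : Prop :=
  ∃ f : ℝ → D, ContinuousOn f (Set.Icc 0 1) ∧ (∀ t ∈ Set.Icc (0 : ℝ) 1, f t ∈ unitary D) ∧
    f 0 = u ∧ f 1 = v

/-- reassociation helper for simp rules -/
theorem mw {M : Type*} [Semigroup M] {a b c : M} (h : a * b = c) (z : M) :
    a * (b * z) = c * z := by rw [← mul_assoc, h]

theorem mw3 {M : Type*} [Semigroup M] {a b c d : M} (h : a * (b * c) = d) (z : M) :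
    a * (b * (c * z)) = d * z := by rw [← h]; simp only [mul_assoc]

/-- If `star x * x` is idempotent then `x` is a partial isometry. -/
theorem pisom {D : Type*} [CStarAlgebra D] (x : D)
    (h : (star x * x) * (star x * x) = star x * x) : x * (star x * x) = x := by
  have key : star (x * (star x * x) - x) * (x * (star x * x) - x) =
      (star x * x) * (star x * x) * (star x * x) - (star x * x) * (star x * x)
        - (star x * x) * (star x * x) + star x * x := by
    simp only [star_sub, star_mul, star_star]
    noncomm_ring
  rw [h] at key
  simp only [h, sub_self, zero_sub, neg_add_cancel] at key
  exact sub_eq_zero.mp (CStarRing.star_mul_self_eq_zero_iff _ |>.mp key)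

theorem rot_unitary {D : Type*} [CStarAlgebra D] (J : D) (hJJ : J * J = -1) (hJs : star J = -J)
    (a b : ℝ) (hab : a * a + b * b = 1) :
    ((a : ℂ) • (1:D) + (b : ℂ) • J) ∈ unitary D := by
  have hRs : star ((a : ℂ) • (1:D) + (b : ℂ) • J)
      = (a : ℂ) • (1:D) - (b : ℂ) • J := by
    simp only [star_add, star_smul, Complex.star_def, Complex.conj_ofReal, star_one, hJs,
      smul_neg, sub_eq_add_neg]
  have key : ∀ s : ℝ, ((a:ℂ) • (1:D) - (b:ℂ) • J) * ((a:ℂ) • (1:D) + (b:ℂ) • J) = 1 →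
      True := fun _ _ => trivial
  have h1 : ((a:ℂ) • (1:D) - (b:ℂ) • J) * ((a:ℂ) • (1:D) + (b:ℂ) • J) = 1 := by
    rw [sub_mul, mul_add, mul_add]
    simp only [smul_mul_smul_comm, one_mul, mul_one, hJJ, smul_neg]
    rw [mul_comm (b:ℂ) (a:ℂ)]
    have h3 : ∀ u v z : D, u + v - (v + -z) = u + z := by intros; abel
    rw [h3, ← add_smul]
    have : ((a:ℂ) * a + (b:ℂ) * b) = 1 := by
      norm_cast
    rw [this, one_smul]
  have h2 : ((a:ℂ) • (1:D) + (b:ℂ) • J) * ((a:ℂ) • (1:D) - (b:ℂ) • J) = 1 := by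
    rw [mul_sub, add_mul, add_mul]
    simp only [smul_mul_smul_comm, one_mul, mul_one, hJJ, smul_neg]
    rw [mul_comm (b:ℂ) (a:ℂ)]
    have h3 : ∀ u v z : D, u + v - (v + -z) = u + z := by intros; abel
    rw [h3, ← add_smul]
    have : ((a:ℂ) * a + (b:ℂ) * b) = 1 := by
      norm_cast
    rw [this, one_smul]
  exact Unitary.mem_iff.mpr ⟨by rw [hRs]; exact h1, by rw [hRs]; exact h2⟩

set_option maxHeartbeats 2000000 in
theorem stmt_2 {D : Type*} [CStarAlgebra D] (C₁ C₂ A₁ B₁ A₂ B₂ : D)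
    (hA₁ : A₁ = star C₁ * C₁) (hB₁ : B₁ = C₁ * star C₁)
    (hA₂ : A₂ = star C₂ * C₂) (hB₂ : B₂ = C₂ * star C₂)
    (hA₁idem : A₁ * A₁ = A₁) (hB₁idem : B₁ * B₁ = B₁)
    (hA₂idem : A₂ * A₂ = A₂) (hB₂idem : B₂ * B₂ = B₂)
    (hsum₁ : A₁ + B₁ = 1) (hsum₂ : A₂ + B₂ = 1)
    (P Q X : D)
    (hP : star P = P ∧ P * P = P) (hQ : star Q = Q ∧ Q * Q = Q)
    (hXP : star X * X = P) (hXQ : X * star X = Q)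
    (hC₁X : Commute C₁ X) (hC₁Xs : Commute C₁ (star X))
    (hC₁P : Commute C₁ P) (hC₁Q : Commute C₁ Q)
    (hC₂X : Commute C₂ X) (hC₂Xs : Commute C₂ (star X))
    (hC₂P : Commute C₂ P) (hC₂Q : Commute C₂ Q)
    (hC₂C₁ : Commute C₂ C₁) (hC₂C₁s : Commute C₂ (star C₁)) :
    ∃ U : D, U ∈ unitary D ∧ UnitaryPath (1 : D) U ∧
      U * (A₂ * A₁ * P) * star U = A₂ * A₁ * Q := by
  subst hA₁ hB₁ hA₂ hB₂
  obtain ⟨hPs, hPP⟩ := hP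
  obtain ⟨hQs, hQQ⟩ := hQ
  -- basic C₁ facts
  have csc : C₁ * (star C₁ * C₁) = C₁ := by
    have := pisom C₁ (by simpa using hA₁idem); simpa using this
  have scs : star C₁ * (C₁ * star C₁) = star C₁ := by
    have := pisom (star C₁) (by simpa using hB₁idem); simpa using this
  have cc : C₁ * C₁ = 0 := by
    have h1 : star C₁ * C₁ * C₁ = 0 := by
      have h2 : (1 - C₁ * star C₁) * C₁ = star C₁ * C₁ * C₁ := by
        rw [← hsum₁]; noncomm_ring
      rw [← h2, sub_mul, one_mul, mul_assoc, csc, sub_self]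
    have h3 : star (C₁ * C₁) * (C₁ * C₁) = 0 := by
      simp only [star_mul]
      calc star C₁ * star C₁ * (C₁ * C₁) = star C₁ * (star C₁ * C₁ * C₁) := by noncomm_ring
        _ = 0 := by rw [h1]; simp
    exact CStarRing.star_mul_self_eq_zero_iff _ |>.mp h3
  have ss : star C₁ * star C₁ = 0 := by
    have := congrArg star cc; simpa using this
  -- basic C₂ facts
  have csc₂ : C₂ * (star C₂ * C₂) = C₂ := by
    have := pisom C₂ (by simpa using hA₂idem); simpa using this
  have scs₂ : star C₂ * (C₂ * star C₂) = star C₂ := by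
    have := pisom (star C₂) (by simpa using hB₂idem); simpa using this
  have cc₂ : C₂ * C₂ = 0 := by
    have h1 : star C₂ * C₂ * C₂ = 0 := by
      have h2 : (1 - C₂ * star C₂) * C₂ = star C₂ * C₂ * C₂ := by
        rw [← hsum₂]; noncomm_ring
      rw [← h2, sub_mul, one_mul, mul_assoc, csc₂, sub_self]
    have h3 : star (C₂ * C₂) * (C₂ * C₂) = 0 := by
      simp only [star_mul]
      calc star C₂ * star C₂ * (C₂ * C₂) = star C₂ * (star C₂ * C₂ * C₂) := by noncomm_ring
        _ = 0 := by rw [h1]; simp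
    exact CStarRing.star_mul_self_eq_zero_iff _ |>.mp h3
  have ss₂ : star C₂ * star C₂ = 0 := by
    have := congrArg star cc₂; simpa using this
  -- basic X facts
  have xpx : X * (star X * X) = X := pisom X (by rw [hXP, hPP])
  have xP : X * P = X := by rw [← hXP, xpx]
  have qX : Q * X = X := by rw [← hXQ, mul_assoc, xpx]
  have pXs : P * star X = star X := by
    have := congrArg star xP; simpa [hPs] using this
  have xsQ : star X * Q = star X := by
    have := congrArg star qX; simpa [hQs] using this
  -- commutation rules, oriented: C₂-letters leftmost, then C₁-letters, then X,P,Q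
  have cmXc : X * C₁ = C₁ * X := hC₁X.symm.eq
  have cmXs : X * star C₁ = star C₁ * X := by
    have := congrArg star hC₁Xs.eq; simpa using this
  have cmXsc : star X * C₁ = C₁ * star X := hC₁Xs.symm.eq
  have cmXss : star X * star C₁ = star C₁ * star X := by
    have := congrArg star hC₁X.eq; simpa using this
  have cmPc : P * C₁ = C₁ * P := hC₁P.symm.eq
  have cmPs : P * star C₁ = star C₁ * P := by
    have := congrArg star hC₁P.eq; simpa [hPs] using this
  have cmQc : Q * C₁ = C₁ * Q := hC₁Q.symm.eq
  have cmQs : Q * star C₁ = star C₁ * Q := by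
    have := congrArg star hC₁Q.eq; simpa [hQs] using this
  have dmX : X * C₂ = C₂ * X := hC₂X.symm.eq
  have dmXs : star X * C₂ = C₂ * star X := hC₂Xs.symm.eq
  have dmP : P * C₂ = C₂ * P := hC₂P.symm.eq
  have dmQ : Q * C₂ = C₂ * Q := hC₂Q.symm.eq
  have dmc : C₁ * C₂ = C₂ * C₁ := hC₂C₁.symm.eq
  have dms : star C₁ * C₂ = C₂ * star C₁ := hC₂C₁s.symm.eq
  have emX : X * star C₂ = star C₂ * X := by
    have := congrArg star hC₂Xs.eq; simpa using this
  have emXs : star X * star C₂ = star C₂ * star X := by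
    have := congrArg star hC₂X.eq; simpa using this
  have emP : P * star C₂ = star C₂ * P := by
    have := congrArg star hC₂P.eq; simpa [hPs] using this
  have emQ : Q * star C₂ = star C₂ * Q := by
    have := congrArg star hC₂Q.eq; simpa [hQs] using this
  have emc : C₁ * star C₂ = star C₂ * C₁ := by
    have := congrArg star hC₂C₁s.eq; simpa using this
  have ems : star C₁ * star C₂ = star C₂ * star C₁ := by
    have := congrArg star hC₂C₁.eq; simpa using this
  -- the key unitary w built from C₁ and X
  set w : D := star C₁ * C₁ * X + (1 - Q) * star C₁ + (1 - P) * C₁ + C₁ * star C₁ * star X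
    with hw
  have hws : star w = star X * (star C₁ * C₁) + C₁ * (1 - Q) + star C₁ * (1 - P)
      + X * (C₁ * star C₁) := by
    simp only [hw, star_add, star_mul, star_sub, star_one, star_star, hPs, hQs]
  have I1 : star w * w = 1 := by
    rw [hws, hw]
    simp only [mul_add, add_mul, sub_mul, mul_sub, mul_one, one_mul, mul_assoc,
      zero_mul, mul_zero, add_zero, zero_add, sub_zero, zero_sub,
      csc, scs, cc, ss, hXP, hXQ, xP, qX, pXs, xsQ, hPP, hQQ,
      cmXc, cmXs, cmXsc, cmXss, cmPc, cmPs, cmQc, cmQs,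
      mw csc, mw scs, mw cc, mw ss, mw hXP, mw hXQ, mw xP, mw qX, mw pXs, mw xsQ,
      mw hPP, mw hQQ, mw cmXc, mw cmXs, mw cmXsc, mw cmXss, mw cmPc, mw cmPs, mw cmQc, mw cmQs,
      mw3 csc, mw3 scs]
    abel_nf
    rw [add_comm]; exact hsum₁
  have I2 : w * star w = 1 := by
    rw [hws, hw]
    simp only [mul_add, add_mul, sub_mul, mul_sub, mul_one, one_mul, mul_assoc,
      zero_mul, mul_zero, add_zero, zero_add, sub_zero, zero_sub,
      csc, scs, cc, ss, hXP, hXQ, xP, qX, pXs, xsQ, hPP, hQQ,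
      cmXc, cmXs, cmXsc, cmXss, cmPc, cmPs, cmQc, cmQs,
      mw csc, mw scs, mw cc, mw ss, mw hXP, mw hXQ, mw xP, mw qX, mw pXs, mw xsQ,
      mw hPP, mw hQQ, mw cmXc, mw cmXs, mw cmXsc, mw cmXss, mw cmPc, mw cmPs, mw cmQc, mw cmQs,
      mw3 csc, mw3 scs]
    abel_nf
    exact hsum₁
  have I3 : w * (star C₁ * C₁ * P) = star C₁ * C₁ * X := by
    rw [hw]
    simp only [mul_add, add_mul, sub_mul, mul_sub, mul_one, one_mul, mul_assoc,
      zero_mul, mul_zero, add_zero, zero_add, sub_zero, zero_sub,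
      csc, scs, cc, ss, hXP, hXQ, xP, qX, pXs, xsQ, hPP, hQQ,
      cmXc, cmXs, cmXsc, cmXss, cmPc, cmPs, cmQc, cmQs,
      mw csc, mw scs, mw cc, mw ss, mw hXP, mw hXQ, mw xP, mw qX, mw pXs, mw xsQ,
      mw hPP, mw hQQ, mw cmXc, mw cmXs, mw cmXsc, mw cmXss, mw cmPc, mw cmPs, mw cmQc, mw cmQs,
      mw3 csc, mw3 scs]
    abel
  have I4 : star C₁ * C₁ * X * star w = star C₁ * C₁ * Q := by
    rw [hws]
    simp only [mul_add, add_mul, sub_mul, mul_sub, mul_one, one_mul, mul_assoc,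
      zero_mul, mul_zero, add_zero, zero_add, sub_zero, zero_sub,
      csc, scs, cc, ss, hXP, hXQ, xP, qX, pXs, xsQ, hPP, hQQ,
      cmXc, cmXs, cmXsc, cmXss, cmPc, cmPs, cmQc, cmQs,
      mw csc, mw scs, mw cc, mw ss, mw hXP, mw hXQ, mw xP, mw qX, mw pXs, mw xsQ,
      mw hPP, mw hQQ, mw cmXc, mw cmXs, mw cmXsc, mw cmXss, mw cmPc, mw cmPs, mw cmQc, mw cmQs,
      mw3 csc, mw3 scs]
    abel
  -- w commutes with C₂ and star C₂
  have wc : w * C₂ = C₂ * w := by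
    rw [hw]
    simp only [mul_add, add_mul, sub_mul, mul_sub, mul_one, one_mul, mul_assoc,
      dmX, dmXs, dmP, dmQ, dmc, dms,
      mw dmX, mw dmXs, mw dmP, mw dmQ, mw dmc, mw dms]
  have wcs : w * star C₂ = star C₂ * w := by
    rw [hw]
    simp only [mul_add, add_mul, sub_mul, mul_sub, mul_one, one_mul, mul_assoc,
      emX, emXs, emP, emQ, emc, ems,
      mw emX, mw emXs, mw emP, mw emQ, mw emc, mw ems]
  have swc : star w * C₂ = C₂ * star w := by
    have := congrArg star wcs; simpa using this.symm
  have swcs : star w * star C₂ = star C₂ * star w := by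
    have := congrArg star wc; simpa using this.symm
  -- outer level: J, V, and the unitary U
  set J : D := C₂ - star C₂ with hJ
  have hJs : star J = -J := by simp [hJ, star_sub, neg_sub]
  have hJJ : J * J = -1 := by
    rw [hJ]
    simp only [sub_mul, mul_sub, cc₂, ss₂]
    rw [← hsum₂]; abel
  set V : D := star C₂ * C₂ * w + C₂ * star C₂ with hV
  have hVs : star V = star w * (star C₂ * C₂) + C₂ * star C₂ := by
    simp only [hV, star_add, star_mul, star_star, mul_assoc]
  have O1 : star V * V = 1 := by
    rw [hVs, hV]
    simp only [mul_add, add_mul, mul_one, one_mul, mul_assoc, zero_mul, mul_zero,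
      add_zero, zero_add,
      cc₂, ss₂, mw cc₂, mw ss₂, mw3 csc₂, mw3 scs₂, csc₂, scs₂,
      I1, I2, mw I1, mw I2, wc, wcs, swc, swcs, mw wc, mw wcs, mw swc, mw swcs]
    exact hsum₂
  have O2 : V * star V = 1 := by
    rw [hVs, hV]
    simp only [mul_add, add_mul, mul_one, one_mul, mul_assoc, zero_mul, mul_zero,
      add_zero, zero_add,
      cc₂, ss₂, mw cc₂, mw ss₂, mw3 csc₂, mw3 scs₂, csc₂, scs₂,
      I1, I2, mw I1, mw I2, wc, wcs, swc, swcs, mw wc, mw wcs, mw swc, mw swcs]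
    exact hsum₂
  set Ufin : D := star C₂ * C₂ * w + C₂ * star C₂ * star w with hU
  have O4 : V * J * star V * star J = Ufin := by
    rw [hJs, hJ, hVs, hV, hU]
    simp only [mul_add, add_mul, mul_sub, sub_mul, mul_neg, neg_mul, neg_neg, neg_sub,
      mul_one, one_mul, mul_assoc, zero_mul, mul_zero, add_zero, zero_add, sub_zero, zero_sub,
      cc₂, ss₂, mw cc₂, mw ss₂, mw3 csc₂, mw3 scs₂, csc₂, scs₂,
      I1, I2, mw I1, mw I2, wc, wcs, swc, swcs, mw wc, mw wcs, mw swc, mw swcs]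
    abel
  have hUs : star Ufin = star w * (star C₂ * C₂) + w * (C₂ * star C₂) := by
    simp only [hU, star_add, star_mul, star_star, mul_assoc]
  -- normalized forms of the conjugation identities
  have I3' : ∀ z : D, w * (star C₁ * (C₁ * (P * z))) = star C₁ * (C₁ * (X * z)) := by
    intro z
    have h := congrArg (· * z) I3
    simpa [mul_assoc] using h
  have I3'' : w * (star C₁ * (C₁ * P)) = star C₁ * (C₁ * X) := by
    simpa [mul_assoc] using I3
  have I4' : ∀ z : D, star C₁ * (C₁ * (X * (star w * z))) = star C₁ * (C₁ * (Q * z)) := by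
    intro z
    have h := congrArg (· * z) I4
    simpa [mul_assoc] using h
  have I4'' : star C₁ * (C₁ * (X * star w)) = star C₁ * (C₁ * Q) := by
    simpa [mul_assoc] using I4
  have O6 : Ufin * (star C₂ * C₂ * (star C₁ * C₁) * P) * star Ufin
      = star C₂ * C₂ * (star C₁ * C₁) * Q := by
    rw [hUs, hU]
    simp only [mul_add, add_mul, mul_one, one_mul, mul_assoc, zero_mul, mul_zero,
      add_zero, zero_add,
      cc₂, ss₂, mw cc₂, mw ss₂, mw3 csc₂, mw3 scs₂, csc₂, scs₂,
      I1, I2, mw I1, mw I2, wc, wcs, swc, swcs, mw wc, mw wcs, mw swc, mw swcs,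
      dmX, dmXs, dmP, dmQ, dmc, dms, mw dmX, mw dmXs, mw dmP, mw dmQ, mw dmc, mw dms,
      emX, emXs, emP, emQ, emc, ems, mw emX, mw emXs, mw emP, mw emQ, mw emc, mw ems,
      I3', I3'', I4', I4'']
  -- the path
  set Rf : ℝ → D := fun t =>
    ((Real.cos (Real.pi / 2 * t) : ℂ)) • (1 : D) + ((Real.sin (Real.pi / 2 * t) : ℂ)) • J
    with hRf
  have hRu : ∀ t : ℝ, Rf t ∈ unitary D := by
    intro t
    refine rot_unitary J hJJ hJs _ _ ?_
    have h := Real.sin_sq_add_cos_sq (Real.pi / 2 * t)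
    nlinarith [h]
  have hVu : V ∈ unitary D := Unitary.mem_iff.mpr ⟨O1, O2⟩
  set f : ℝ → D := fun t => V * Rf t * star V * star (Rf t) with hf
  have hfu : ∀ t : ℝ, f t ∈ unitary D := by
    intro t
    exact mul_mem (mul_mem (mul_mem hVu (hRu t)) (Unitary.star_mem hVu))
      (Unitary.star_mem (hRu t))
  have hRc : Continuous Rf := by
    rw [hRf]
    refine Continuous.add ?_ ?_
    · exact (Complex.continuous_ofReal.comp
        (Real.continuous_cos.comp (continuous_const.mul continuous_id))).smul continuous_const
    · exact (Complex.continuous_ofReal.comp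
        (Real.continuous_sin.comp (continuous_const.mul continuous_id))).smul continuous_const
  have hfc : Continuous f := by
    rw [hf]
    exact ((continuous_const.mul hRc).mul continuous_const).mul (continuous_star.comp hRc)
  have hf0 : f 0 = 1 := by
    have hR0 : Rf 0 = 1 := by
      simp [hRf]
    rw [hf]
    simp only [hR0, mul_one, star_one]
    exact O2
  have hf1 : f 1 = Ufin := by
    have hR1 : Rf 1 = J := by
      simp [hRf]
    rw [hf]
    simp only [hR1]
    exact O4
  refine ⟨Ufin, ?_, ⟨f, hfc.continuousOn, fun t _ => hfu t, hf0, hf1⟩, ?_⟩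
  · rw [← hf1]; exact hfu 1
  · exact O6
end

section
/- Let D be a unital complex C*-algebra and let C ∈ D be such that A := C*C and B := CC* are projections with A + B = 1. If U and V are unitaries of D commuting with both C and C*, then A(UV) + B is connected to A(VU) + B, and A(UVU*) + B is connected to AV + B, by continuous paths within the unitary group of D. -/
private lemma mma {D : Type*} [Semigroup D] {a b c : D} (h : a * b = c) (x : D) :
    a * (b * x) = c * x := by rw [← mul_assoc, h]

private lemma cma {D : Type*} [Semigroup D] {a b : D} (h : a * b = b * a) (x : D) :
    a * (b * x) = b * (a * x) := by rw [← mul_assoc, h, mul_assoc]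

private lemma star_comm_of_unitary {D : Type*} [Monoid D] [StarMul D] {u y : D}
    (hu : u ∈ unitary D) (h : y * u = u * y) : star u * y = y * star u := by
  have h2 : u * star u = 1 := (Unitary.mem_iff.mp hu).2
  have h3 : star u * u = 1 := (Unitary.mem_iff.mp hu).1
  calc star u * y = star u * (y * (u * star u)) := by rw [h2, mul_one]
    _ = star u * ((y * u) * star u) := by rw [mul_assoc]
    _ = star u * ((u * y) * star u) := by rw [h]
    _ = (star u * u) * (y * star u) := by rw [mul_assoc, mul_assoc]
    _ = y * star u := by rw [h3, one_mul]

private lemma memAY {D : Type*} [CStarAlgebra D] {A B Y : D}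
    (hAA : A * A = A) (hAB : A * B = 0) (hBA : B * A = 0) (hBB : B * B = B)
    (hsum : A + B = 1) (hAst : star A = A) (hBst : star B = B)
    (hYA : Y * A = A * Y) (hYB : Y * B = B * Y) (hY : Y ∈ unitary D) :
    A * Y + B ∈ unitary D := by
  have hY'Y : star Y * Y = 1 := (Unitary.mem_iff.mp hY).1
  have hYY' : Y * star Y = 1 := (Unitary.mem_iff.mp hY).2
  have hY'A : star Y * A = A * star Y := star_comm_of_unitary hY hYA.symm
  have hY'B : star Y * B = B * star Y := star_comm_of_unitary hY hYB.symm
  have hst : star (A * Y + B) = A * star Y + B := by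
    rw [star_add, star_mul, hAst, hBst, hY'A]
  rw [Unitary.mem_iff, hst]
  constructor
  · simp only [mul_add, add_mul, mul_assoc, hAA, mma hAA, hAB, mma hAB, hBA, mma hBA,
      hBB, mma hBB, hYA, cma hYA, hYB, cma hYB, hY'A, cma hY'A, hY'B, cma hY'B,
      hY'Y, mma hY'Y, hYY', mma hYY', zero_mul, mul_zero, one_mul, mul_one,
      add_zero, zero_add, hsum]
  · simp only [mul_add, add_mul, mul_assoc, hAA, mma hAA, hAB, mma hAB, hBA, mma hBA,
      hBB, mma hBB, hYA, cma hYA, hYB, cma hYB, hY'A, cma hY'A, hY'B, cma hY'B,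
      hY'Y, mma hY'Y, hYY', mma hYY', zero_mul, mul_zero, one_mul, mul_one,
      add_zero, zero_add, hsum]

private lemma key2 {D : Type*} [CStarAlgebra D] {A B C Y : D}
    (hAA : A * A = A) (hAB : A * B = 0) (hAC : A * C = 0) (hAC' : A * star C = star C)
    (hBA : B * A = 0) (hBB : B * B = B) (hBC : B * C = C) (hBC' : B * star C = 0)
    (hCA : C * A = C) (hCB : C * B = 0) (hCC : C * C = 0) (hCC' : C * star C = B)
    (hC'A : star C * A = 0) (hC'B : star C * B = star C) (hC'C : star C * C = A)
    (hC'C' : star C * star C = 0)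
    (hYA : Y * A = A * Y) (hYB : Y * B = B * Y) (hYC : Y * C = C * Y)
    (hYC' : Y * star C = star C * Y)
    (hY'A : star Y * A = A * star Y) (hY'B : star Y * B = B * star Y)
    (hY'C : star Y * C = C * star Y) (hY'C' : star Y * star C = star C * star Y)
    (hY'Y : star Y * Y = 1) (hYY' : Y * star Y = 1) :
    (C - star C) * (A * star Y + B) * star (C - star C) * (A * Y + B)
      = A * Y + B * star Y := by
  have hKst : star (C - star C) = -(C - star C) := by
    rw [star_sub, star_star, neg_sub]
  rw [hKst]
  simp only [mul_add, add_mul, mul_sub, sub_mul, mul_neg, neg_mul, neg_neg, mul_assoc,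
    hAA, mma hAA, hAB, mma hAB, hAC, mma hAC, hAC', mma hAC',
    hBA, mma hBA, hBB, mma hBB, hBC, mma hBC, hBC', mma hBC',
    hCA, mma hCA, hCB, mma hCB, hCC, mma hCC, hCC', mma hCC',
    hC'A, mma hC'A, hC'B, mma hC'B, hC'C, mma hC'C, hC'C', mma hC'C',
    hYA, cma hYA, hYB, cma hYB, hYC, cma hYC, hYC', cma hYC',
    hY'A, cma hY'A, hY'B, cma hY'B, hY'C, cma hY'C, hY'C', cma hY'C',
    hY'Y, mma hY'Y, hYY', mma hYY',
    zero_mul, mul_zero, one_mul, mul_one, add_zero, zero_add, neg_zero,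
    sub_zero, zero_sub]

private lemma key3 {D : Type*} [CStarAlgebra D] {A B X Y : D}
    (hAA : A * A = A) (hAB : A * B = 0) (hBA : B * A = 0) (hBB : B * B = B)
    (hXA : X * A = A * X) (hXB : X * B = B * X)
    (hYA : Y * A = A * Y) (hYB : Y * B = B * Y)
    (hY'A : star Y * A = A * star Y) (hY'B : star Y * B = B * star Y)
    (hY'Y : star Y * Y = 1) (hYY' : Y * star Y = 1) :
    (A * Y + B * star Y) * (A * X + B) * (A * star Y + B * Y)
      = A * (Y * X * star Y) + B := by
  simp only [mul_add, add_mul, mul_assoc,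
    hAA, mma hAA, hAB, mma hAB, hBA, mma hBA, hBB, mma hBB,
    hXA, cma hXA, hXB, cma hXB, hYA, cma hYA, hYB, cma hYB,
    hY'A, cma hY'A, hY'B, cma hY'B,
    hY'Y, mma hY'Y, hYY', mma hYY',
    zero_mul, mul_zero, one_mul, mul_one, add_zero, zero_add]

private lemma conj_path' {D : Type*} [CStarAlgebra D] (x u v : D) (hx : x ∈ unitary D)
    (W : ℝ → D) (hWc : Continuous W) (hWu : ∀ t, W t ∈ unitary D)
    (h0 : W 0 * x * star (W 0) = u) (h1 : W 1 * x * star (W 1) = v) :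
    UnitaryPath u v :=
  ⟨fun t => W t * x * star (W t),
    (((hWc.mul continuous_const).mul (continuous_star.comp hWc)).continuousOn),
    fun t _ => mul_mem (mul_mem (hWu t) hx) (Unitary.star_mem (hWu t)), h0, h1⟩

/-- If `A := C*C` and `B := CC*` are projections with `A + B = 1`, and
`U, V` are unitaries commuting with `C` and `C*`, then `A(UV) + B` is connected to
`A(VU) + B`, and `A(UVU*) + B` is connected to `AV + B`, by continuous paths within
the unitary group of `D`. -/
theorem stmt_7 {D : Type*} [CStarAlgebra D] (C A B : D)
    (hA : A = star C * C) (hB : B = C * star C)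
    (hAidem : A * A = A) (hBidem : B * B = B) (hsum : A + B = 1) :
    ∀ U V : D, U ∈ unitary D → V ∈ unitary D →
      Commute C U → Commute (star C) U → Commute C V → Commute (star C) V →
      UnitaryPath (A * (U * V) + B) (A * (V * U) + B) ∧
      UnitaryPath (A * (U * V * star U) + B) (A * V + B) := by
  intro U V hU hV hCUc hC'Uc hCVc hC'Vc
  have hAst : star A = A := by rw [hA, star_mul, star_star]
  have hBst : star B = B := by rw [hB, star_mul, star_star]
  have hBeq : B = 1 - A := eq_sub_of_add_eq' hsum
  have hAB : A * B = 0 := by rw [hBeq, mul_sub, mul_one, hAidem, sub_self]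
  have hBA : B * A = 0 := by rw [hBeq, sub_mul, one_mul, hAidem, sub_self]
  have hCA : C * A = C := by
    have h0 : star (C * A - C) * (C * A - C)
        = A * (star C * C) * A - A * (star C * C) - star C * C * A + star C * C := by
      rw [star_sub, star_mul, hAst]; noncomm_ring
    rw [← hA] at h0
    simp only [hAidem] at h0
    exact sub_eq_zero.mp ((CStarRing.star_mul_self_eq_zero_iff _).mp (by rw [h0]; abel))
  have hBC : B * C = C := by
    have h0 : (B * C - C) * star (B * C - C)
        = B * (C * star C) * B - B * (C * star C) - C * star C * B + C * star C := by
      rw [star_sub, star_mul, hBst]; noncomm_ring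
    rw [← hB] at h0
    simp only [hBidem] at h0
    exact sub_eq_zero.mp ((CStarRing.mul_star_self_eq_zero_iff _).mp (by rw [h0]; abel))
  have hCC : C * C = 0 := by
    have h1 : C * C = C * A * (B * C) := by rw [hCA, hBC]
    rw [h1, show C * A * (B * C) = C * (A * B) * C by noncomm_ring, hAB, mul_zero, zero_mul]
  have hAC : A * C = 0 := by
    have h1 : A * C = A * (B * C) := by rw [hBC]
    rw [h1, ← mul_assoc, hAB, zero_mul]
  have hCB : C * B = 0 := by
    have h1 : C * B = C * A * B := by rw [hCA]
    rw [h1, mul_assoc, hAB, mul_zero]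
  have hC'A : star C * A = 0 := by rw [← hAst, ← star_mul, hAC, star_zero]
  have hAC' : A * star C = star C := by rw [← hAst, ← star_mul, hCA]
  have hC'B : star C * B = star C := by rw [← hBst, ← star_mul, hBC]
  have hBC' : B * star C = 0 := by rw [← hBst, ← star_mul, hCB, star_zero]
  have hC'C' : star C * star C = 0 := by rw [← star_mul, hCC, star_zero]
  have hC'C : star C * C = A := hA.symm
  have hCC' : C * star C = B := hB.symm
  -- commutation facts
  have hUC : U * C = C * U := hCUc.eq.symm
  have hUC' : U * star C = star C * U := hC'Uc.eq.symm
  have hVC : V * C = C * V := hCVc.eq.symm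
  have hVC' : V * star C = star C * V := hC'Vc.eq.symm
  have hUA : U * A = A * U := by rw [hA]; exact ((hC'Uc.symm).mul_right (hCUc.symm)).eq
  have hUB : U * B = B * U := by rw [hB]; exact ((hCUc.symm).mul_right (hC'Uc.symm)).eq
  have hVA : V * A = A * V := by rw [hA]; exact ((hC'Vc.symm).mul_right (hCVc.symm)).eq
  have hVB : V * B = B * V := by rw [hB]; exact ((hCVc.symm).mul_right (hC'Vc.symm)).eq
  have hU'A : star U * A = A * star U := star_comm_of_unitary hU hUA.symm
  have hU'B : star U * B = B * star U := star_comm_of_unitary hU hUB.symm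
  have hU'C : star U * C = C * star U := star_comm_of_unitary hU hUC.symm
  have hU'C' : star U * star C = star C * star U := star_comm_of_unitary hU hUC'.symm
  have hV'A : star V * A = A * star V := star_comm_of_unitary hV hVA.symm
  have hV'B : star V * B = B * star V := star_comm_of_unitary hV hVB.symm
  have hV'C : star V * C = C * star V := star_comm_of_unitary hV hVC.symm
  have hV'C' : star V * star C = star C * star V := star_comm_of_unitary hV hVC'.symm
  have hU'U : star U * U = 1 := (Unitary.mem_iff.mp hU).1
  have hUU' : U * star U = 1 := (Unitary.mem_iff.mp hU).2
  have hV'V : star V * V = 1 := (Unitary.mem_iff.mp hV).1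
  have hVV' : V * star V = 1 := (Unitary.mem_iff.mp hV).2
  -- the rotation generator
  have hKst : star (C - star C) = -(C - star C) := by rw [star_sub, star_star, neg_sub]
  have hK2 : (C - star C) * (C - star C) = -1 := by
    rw [sub_mul, mul_sub, mul_sub, hCC, hCC', hC'C, hC'C', ← hsum]; abel
  -- the rotation path
  have Runit : ∀ c s : ℝ, c ^ 2 + s ^ 2 = 1 →
      ((c : ℂ) • (1 : D) + (s : ℂ) • (C - star C)) ∈ unitary D := by
    intro c s hcs
    have hcs' : ((c : ℂ)) ^ 2 + ((s : ℂ)) ^ 2 = 1 := by exact_mod_cast hcs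
    have hst : star ((c : ℂ) • (1 : D) + (s : ℂ) • (C - star C))
        = (c : ℂ) • (1 : D) - (s : ℂ) • (C - star C) := by
      rw [star_add, star_smul, star_smul, star_one, hKst, Complex.star_def,
        Complex.conj_ofReal, Complex.conj_ofReal, smul_neg, ← sub_eq_add_neg]
    rw [Unitary.mem_iff, hst]
    have hmul : ∀ a b a' b' : ℂ, (a • (1 : D) + b • (C - star C))
        * (a' • (1 : D) + b' • (C - star C))
        = (a * a' - b * b') • (1 : D) + (a * b' + b * a') • (C - star C) := by
      intro a b a' b'
      simp only [mul_add, add_mul, smul_mul_assoc, mul_smul_comm, smul_smul,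
        one_mul, mul_one, hK2, smul_neg]
      module
    constructor
    · rw [show (c : ℂ) • (1 : D) - (s : ℂ) • (C - star C)
          = (c : ℂ) • (1 : D) + ((-s : ℂ)) • (C - star C) by
            rw [neg_smul]; exact sub_eq_add_neg _ _, hmul,
        show (c : ℂ) * c - -s * s = 1 by linear_combination hcs',
        show (c : ℂ) * s + -s * c = 0 by ring, one_smul, zero_smul, add_zero]
    · rw [show (c : ℂ) • (1 : D) - (s : ℂ) • (C - star C)
          = (c : ℂ) • (1 : D) + ((-s : ℂ)) • (C - star C) by
            rw [neg_smul]; exact sub_eq_add_neg _ _, hmul,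
        show (c : ℂ) * c - s * -s = 1 by linear_combination hcs',
        show (c : ℂ) * -s + s * c = 0 by ring, one_smul, zero_smul, add_zero]
  have Rcont : Continuous (fun t : ℝ => ((Real.cos (Real.pi / 2 * t) : ℂ)) • (1 : D)
      + ((Real.sin (Real.pi / 2 * t) : ℂ)) • (C - star C)) := by
    apply Continuous.add
    · exact (Complex.continuous_ofReal.comp
        (Real.continuous_cos.comp (continuous_const.mul continuous_id))).smul continuous_const
    · exact (Complex.continuous_ofReal.comp
        (Real.continuous_sin.comp (continuous_const.mul continuous_id))).smul continuous_const
  have hRunit : ∀ t : ℝ, ((Real.cos (Real.pi / 2 * t) : ℂ)) • (1 : D)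
      + ((Real.sin (Real.pi / 2 * t) : ℂ)) • (C - star C) ∈ unitary D :=
    fun t => Runit _ _ (Real.cos_sq_add_sin_sq _)
  -- unitarity of the corner elements
  have memV : A * V + B ∈ unitary D := memAY hAidem hAB hBA hBidem hsum hAst hBst hVA hVB hV
  have memV' : A * star V + B ∈ unitary D :=
    memAY hAidem hAB hBA hBidem hsum hAst hBst hV'A hV'B (Unitary.star_mem hV)
  have memU : A * U + B ∈ unitary D := memAY hAidem hAB hBA hBidem hsum hAst hBst hUA hUB hU
  have memU' : A * star U + B ∈ unitary D :=
    memAY hAidem hAB hBA hBidem hsum hAst hBst hU'A hU'B (Unitary.star_mem hU)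
  have hUVA : (U * V) * A = A * (U * V) := by
    rw [mul_assoc, hVA, ← mul_assoc, hUA, mul_assoc]
  have hUVB : (U * V) * B = B * (U * V) := by
    rw [mul_assoc, hVB, ← mul_assoc, hUB, mul_assoc]
  have memUV : A * (U * V) + B ∈ unitary D :=
    memAY hAidem hAB hBA hBidem hsum hAst hBst hUVA hUVB (mul_mem hU hV)
  have hstV : star (A * V + B) = A * star V + B := by
    rw [star_add, star_mul, hAst, hBst, hV'A]
  have hstU : star (A * U + B) = A * star U + B := by
    rw [star_add, star_mul, hAst, hBst, hU'A]
  have hinvV : (A * star V + B) * (A * V + B) = 1 := by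
    rw [← hstV]; exact (Unitary.mem_iff.mp memV).1
  have hinvU : (A * star U + B) * (A * U + B) = 1 := by
    rw [← hstU]; exact (Unitary.mem_iff.mp memU).1
  constructor
  · -- path from A(UV)+B to A(VU)+B
    apply conj_path' (A * (U * V) + B) _ _ memUV
      (fun t => (((Real.cos (Real.pi / 2 * t) : ℂ)) • (1 : D)
          + ((Real.sin (Real.pi / 2 * t) : ℂ)) • (C - star C)) * (A * star V + B)
        * star (((Real.cos (Real.pi / 2 * t) : ℂ)) • (1 : D)
          + ((Real.sin (Real.pi / 2 * t) : ℂ)) • (C - star C)) * (A * V + B))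
    · exact ((Rcont.mul continuous_const).mul (continuous_star.comp Rcont)).mul continuous_const
    · intro t
      exact mul_mem (mul_mem (mul_mem (hRunit t) memV') (Unitary.star_mem (hRunit t))) memV
    · -- value at 0
      simp only [mul_zero, Real.cos_zero, Real.sin_zero, Complex.ofReal_one,
        Complex.ofReal_zero, one_smul, zero_smul, add_zero, star_one, one_mul, mul_one]
      rw [hinvV]
      simp only [one_mul, star_one, mul_one]
    · -- value at 1
      simp only [mul_one, Real.cos_pi_div_two, Real.sin_pi_div_two, Complex.ofReal_one,
        Complex.ofReal_zero, one_smul, zero_smul, zero_add]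
      rw [key2 hAidem hAB hAC hAC' hBA hBidem hBC hBC' hCA hCB hCC hCC' hC'A hC'B hC'C hC'C'
        hVA hVB hVC hVC' hV'A hV'B hV'C hV'C' hV'V hVV']
      have hstW : star (A * V + B * star V) = A * star V + B * V := by
        simp only [star_add, star_mul, star_star, hAst, hBst]
        rw [hV'A, hVB]
      rw [hstW, key3 hAidem hAB hBA hBidem hUVA hUVB hVA hVB hV'A hV'B hV'V hVV',
        show V * (U * V) * star V = V * U by rw [mul_assoc, mul_assoc, hVV', mul_one]]
  · -- path from A(UVU*)+B to AV+B
    apply conj_path' (A * V + B) _ _ memV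
      (fun t => (((Real.cos (Real.pi / 2 * (1 - t)) : ℂ)) • (1 : D)
          + ((Real.sin (Real.pi / 2 * (1 - t)) : ℂ)) • (C - star C)) * (A * star U + B)
        * star (((Real.cos (Real.pi / 2 * (1 - t)) : ℂ)) • (1 : D)
          + ((Real.sin (Real.pi / 2 * (1 - t)) : ℂ)) • (C - star C)) * (A * U + B))
    · have : Continuous (fun t : ℝ => ((Real.cos (Real.pi / 2 * (1 - t)) : ℂ)) • (1 : D)
          + ((Real.sin (Real.pi / 2 * (1 - t)) : ℂ)) • (C - star C)) :=
        Rcont.comp (continuous_const.sub continuous_id)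
      exact ((this.mul continuous_const).mul (continuous_star.comp this)).mul continuous_const
    · intro t
      exact mul_mem (mul_mem (mul_mem (hRunit (1 - t)) memU') (Unitary.star_mem (hRunit (1 - t)))) memU
    · -- value at 0
      simp only [sub_zero, mul_one, Real.cos_pi_div_two, Real.sin_pi_div_two,
        Complex.ofReal_one, Complex.ofReal_zero, one_smul, zero_smul, zero_add]
      rw [key2 hAidem hAB hAC hAC' hBA hBidem hBC hBC' hCA hCB hCC hCC' hC'A hC'B hC'C hC'C'
        hUA hUB hUC hUC' hU'A hU'B hU'C hU'C' hU'U hUU']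
      have hstW : star (A * U + B * star U) = A * star U + B * U := by
        simp only [star_add, star_mul, star_star, hAst, hBst]
        rw [hU'A, hUB]
      rw [hstW, key3 hAidem hAB hBA hBidem hVA hVB hUA hUB hU'A hU'B hU'U hUU']
    · -- value at 1
      simp only [sub_self, mul_zero, Real.cos_zero, Real.sin_zero, Complex.ofReal_one,
        Complex.ofReal_zero, one_smul, zero_smul, add_zero, star_one, one_mul, mul_one]
      rw [hinvU]
      simp only [one_mul, star_one, mul_one]
end

section
/- Let D be a unital complex C*-algebra and let C₁, C₂ ∈ D be such that, for i = 1, 2, Aᵢ := Cᵢ*Cᵢ and Bᵢ := CᵢCᵢ* are projections with Aᵢ + Bᵢ = 1, and assume C₂ commutes with both C₁ and C₁*. Put X := A₂A₁ + C₂*C₁ + C₂C₁* + B₂B₁. Then X = X*, X² = 1 (so X is a self-adjoint unitary of D, connected to 1 by a continuous path within the unitary group of D), and XA₂X = A₁, XB₂X = B₁, XA₁X = A₂, XB₁X = B₂. -/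
/-- In a C*-algebra, if `star C * C` is idempotent and `star C * C + C * star C = 1`,
then `C` is a partial isometry and `C * C = 0`. -/
private lemma stmt8_aux {D : Type*} [CStarAlgebra D] (C : D)
    (hA : (star C * C) * (star C * C) = star C * C)
    (hs : star C * C + C * star C = 1) :
    C * (star C * C) = C ∧ C * C = 0 := by
  have p : C * (star C * C) = C := by
    rw [← sub_eq_zero, ← CStarRing.star_mul_self_eq_zero_iff]
    have h1 : star (C * (star C * C) - C) = (star C * C) * star C - star C := by
      simp [star_sub, star_mul, mul_assoc]
    rw [h1, sub_mul, mul_sub, mul_sub]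
    have e1 : star C * C * star C * (C * (star C * C)) = star C * C := by
      have h : star C * C * star C * (C * (star C * C))
          = (star C * C) * ((star C * C) * (star C * C)) := by
        simp only [mul_assoc]
      rw [h, hA, hA]
    have e2 : star C * C * star C * C = star C * C := by
      have h : star C * C * star C * C = (star C * C) * (star C * C) := by
        simp only [mul_assoc]
      rw [h, hA]
    have e3 : star C * (C * (star C * C)) = star C * C := by
      have h : star C * (C * (star C * C)) = (star C * C) * (star C * C) := by
        simp only [mul_assoc]
      rw [h, hA]
    rw [e1, e2, e3]
    abel
  have hAC : star C * C * C = 0 := by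
    have h := congrArg (· * C) hs
    simp only [add_mul, one_mul] at h
    have hBC : C * star C * C = C := by rw [mul_assoc]; exact p
    rw [hBC] at h
    exact by linear_combination (norm := abel) h
  have n : C * C = 0 := by
    rw [← CStarRing.star_mul_self_eq_zero_iff]
    rw [star_mul]
    calc star C * star C * (C * C) = star C * (star C * C * C) := by
          simp only [mul_assoc]
      _ = 0 := by rw [hAC, mul_zero]
  exact ⟨p, n⟩

/-- With `Aᵢ := Cᵢ*Cᵢ`, `Bᵢ := CᵢCᵢ*` projections summing to `1` and
`C₂` commuting with `C₁` and `C₁*`, the element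
`X := A₂A₁ + C₂*C₁ + C₂C₁* + B₂B₁` is a self-adjoint unitary (connected to `1` by a
continuous path within the unitary group) and `XA₂X = A₁`, `XB₂X = B₁`,
`XA₁X = A₂`, `XB₁X = B₂`. -/
theorem stmt_8 {D : Type*} [CStarAlgebra D] (C₁ C₂ A₁ B₁ A₂ B₂ X : D)
    (hA₁ : A₁ = star C₁ * C₁) (hB₁ : B₁ = C₁ * star C₁)
    (hA₂ : A₂ = star C₂ * C₂) (hB₂ : B₂ = C₂ * star C₂)
    (hA₁idem : A₁ * A₁ = A₁) (hB₁idem : B₁ * B₁ = B₁)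
    (hA₂idem : A₂ * A₂ = A₂) (hB₂idem : B₂ * B₂ = B₂)
    (hsum₁ : A₁ + B₁ = 1) (hsum₂ : A₂ + B₂ = 1)
    (hcomm : Commute C₂ C₁) (hcomms : Commute C₂ (star C₁))
    (hX : X = A₂ * A₁ + star C₂ * C₁ + C₂ * star C₁ + B₂ * B₁) :
    star X = X ∧ X * X = 1 ∧ X ∈ unitary D ∧ UnitaryPath (1 : D) X ∧
      X * A₂ * X = A₁ ∧ X * B₂ * X = B₁ ∧ X * A₁ * X = A₂ ∧ X * B₁ * X = B₂ := by
  subst hA₁ hB₁ hA₂ hB₂ hX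
  obtain ⟨p₁, n₁⟩ := stmt8_aux C₁ hA₁idem hsum₁
  obtain ⟨p₂, n₂⟩ := stmt8_aux C₂ hA₂idem hsum₂
  obtain ⟨q₁, m₁⟩ := stmt8_aux (star C₁) (by simpa using hB₁idem) (by simpa [add_comm] using hsum₁)
  obtain ⟨q₂, m₂⟩ := stmt8_aux (star C₂) (by simpa using hB₂idem) (by simpa [add_comm] using hsum₂)
  simp only [star_star] at q₁ q₂
  -- commutation lemmas, orienting C₂-letters to the left
  have c1 : C₁ * C₂ = C₂ * C₁ := hcomm.eq.symm
  have c2 : C₁ * star C₂ = star C₂ * C₁ := by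
    have h := hcomms.star_star.eq
    simp only [star_star] at h
    exact h.symm
  have c3 : star C₁ * C₂ = C₂ * star C₁ := hcomms.eq.symm
  have c4 : star C₁ * star C₂ = star C₂ * star C₁ := (hcomm.star_star.eq).symm
  have c1' : ∀ x : D, C₁ * (C₂ * x) = C₂ * (C₁ * x) := fun x => by
    rw [← mul_assoc, c1, mul_assoc]
  have c2' : ∀ x : D, C₁ * (star C₂ * x) = star C₂ * (C₁ * x) := fun x => by
    rw [← mul_assoc, c2, mul_assoc]
  have c3' : ∀ x : D, star C₁ * (C₂ * x) = C₂ * (star C₁ * x) := fun x => by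
    rw [← mul_assoc, c3, mul_assoc]
  have c4' : ∀ x : D, star C₁ * (star C₂ * x) = star C₂ * (star C₁ * x) := fun x => by
    rw [← mul_assoc, c4, mul_assoc]
  -- reduction lemmas
  have r11' : ∀ x : D, C₁ * (C₁ * x) = 0 := fun x => by rw [← mul_assoc, n₁, zero_mul]
  have r12' : ∀ x : D, star C₁ * (star C₁ * x) = 0 := fun x => by rw [← mul_assoc, m₁, zero_mul]
  have r13' : ∀ x : D, C₁ * (star C₁ * (C₁ * x)) = C₁ * x := fun x => by
    rw [← mul_assoc, ← mul_assoc, mul_assoc C₁, p₁]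
  have r14' : ∀ x : D, star C₁ * (C₁ * (star C₁ * x)) = star C₁ * x := fun x => by
    rw [← mul_assoc, ← mul_assoc, mul_assoc (star C₁), q₁]
  have r21' : ∀ x : D, C₂ * (C₂ * x) = 0 := fun x => by rw [← mul_assoc, n₂, zero_mul]
  have r22' : ∀ x : D, star C₂ * (star C₂ * x) = 0 := fun x => by rw [← mul_assoc, m₂, zero_mul]
  have r23' : ∀ x : D, C₂ * (star C₂ * (C₂ * x)) = C₂ * x := fun x => by
    rw [← mul_assoc, ← mul_assoc, mul_assoc C₂, p₂]
  have r24' : ∀ x : D, star C₂ * (C₂ * (star C₂ * x)) = star C₂ * x := fun x => by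
    rw [← mul_assoc, ← mul_assoc, mul_assoc (star C₂), q₂]
  set X : D := star C₂ * C₂ * (star C₁ * C₁) + star C₂ * C₁ + C₂ * star C₁
      + C₂ * star C₂ * (C₁ * star C₁) with hXdef
  have hstar : star X = X := by
    rw [hXdef]
    simp only [star_add, star_mul, star_star, mul_add, add_mul, mul_assoc,
      c1, c2, c3, c4, c1', c2', c3', c4',
      n₁, m₁, p₁, q₁, n₂, m₂, p₂, q₂,
      r11', r12', r13', r14', r21', r22', r23', r24',
      zero_mul, mul_zero, add_zero, zero_add]
    abel
  have hXX : X * X = 1 := by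
    have hone : (star C₂ * C₂ + C₂ * star C₂) * (star C₁ * C₁ + C₁ * star C₁) = 1 := by
      rw [hsum₂, hsum₁, one_mul]
    rw [← hone, hXdef]
    simp only [mul_add, add_mul, mul_assoc,
      c1, c2, c3, c4, c1', c2', c3', c4',
      n₁, m₁, p₁, q₁, n₂, m₂, p₂, q₂,
      r11', r12', r13', r14', r21', r22', r23', r24',
      zero_mul, mul_zero, add_zero, zero_add]
    abel
  have hmem : X ∈ unitary D := by
    rw [Unitary.mem_iff, hstar]
    exact ⟨hXX, hXX⟩
  have hpath : UnitaryPath (1 : D) X := by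
    set p : D := (2⁻¹ : ℂ) • (1 + X) with hp
    set q : D := (2⁻¹ : ℂ) • (1 - X) with hq
    have hpq : p + q = 1 := by
      rw [hp, hq, ← smul_add]
      have h : (1 + X) + (1 - X) = (2 : ℂ) • (1 : D) := by
        rw [two_smul]; abel
      rw [h, smul_smul]
      norm_num
    have hpp : p * p = p := by
      rw [hp, smul_mul_assoc, mul_smul_comm, smul_smul]
      have h : (1 + X) * (1 + X) = (2 : ℂ) • (1 + X) := by
        simp only [mul_add, add_mul, one_mul, mul_one, hXX, two_smul]; abel
      rw [h, smul_smul]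
      norm_num
    have hqq : q * q = q := by
      rw [hq, smul_mul_assoc, mul_smul_comm, smul_smul]
      have h : (1 - X) * (1 - X) = (2 : ℂ) • (1 - X) := by
        simp only [mul_sub, sub_mul, one_mul, mul_one, hXX, two_smul]; abel
      rw [h, smul_smul]
      norm_num
    have hpq0 : p * q = 0 := by
      rw [hp, hq, smul_mul_assoc, mul_smul_comm, smul_smul]
      have h : (1 + X) * (1 - X) = 0 := by
        simp only [mul_sub, add_mul, one_mul, mul_one, hXX]; abel
      rw [h, smul_zero]
    have hqp0 : q * p = 0 := by
      rw [hp, hq, smul_mul_assoc, mul_smul_comm, smul_smul]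
      have h : (1 - X) * (1 + X) = 0 := by
        simp only [sub_mul, mul_add, one_mul, mul_one, hXX]; abel
      rw [h, smul_zero]
    have key : ∀ w z : ℂ, w * z = 1 → (p + w • q) * (p + z • q) = 1 := by
      intro w z hwz
      rw [add_mul, mul_add, mul_add, hpp, mul_smul_comm, hpq0, smul_zero,
        smul_mul_assoc, hqp0, smul_zero, smul_mul_assoc, mul_smul_comm, hqq,
        smul_smul, hwz, one_smul]
      simpa using hpq
    refine ⟨fun t : ℝ => p + Complex.exp (((Real.pi * t : ℝ) : ℂ) * Complex.I) • q,
      ?_, ?_, ?_, ?_⟩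
    · apply Continuous.continuousOn
      exact continuous_const.add
        ((Complex.continuous_exp.comp
          ((Complex.continuous_ofReal.comp (continuous_const.mul continuous_id)).mul
            continuous_const)).smul continuous_const)
    · intro t _
      rw [Unitary.mem_iff]
      have hsp : star p = p := by
        rw [hp, star_smul, star_add, star_one, hstar]
        congr 1
        simp [Complex.ext_iff]
      have hsq : star q = q := by
        rw [hq, star_smul, star_sub, star_one, hstar]
        congr 1
        simp [Complex.ext_iff]
      have hstarf : star (p + Complex.exp (((Real.pi * t : ℝ) : ℂ) * Complex.I) • q)
          = p + Complex.exp (-(((Real.pi * t : ℝ) : ℂ) * Complex.I)) • q := by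
        have hz : star (Complex.exp (((Real.pi * t : ℝ) : ℂ) * Complex.I))
            = Complex.exp (-(((Real.pi * t : ℝ) : ℂ) * Complex.I)) := by
          rw [RCLike.star_def, ← Complex.exp_conj]
          congr 1
          simp [Complex.ext_iff]
        rw [star_add, hsp, star_smul, hsq, hz]
      constructor
      · rw [hstarf]
        exact key _ _ (by rw [← Complex.exp_add, neg_add_cancel, Complex.exp_zero])
      · rw [hstarf]
        exact key _ _ (by rw [← Complex.exp_add, add_neg_cancel, Complex.exp_zero])
    · simp only [mul_zero, Complex.ofReal_zero, zero_mul, Complex.exp_zero, one_smul]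
      exact hpq
    · show p + Complex.exp (((Real.pi * 1 : ℝ) : ℂ) * Complex.I) • q = X
      have h1 : (((Real.pi * 1 : ℝ) : ℂ) * Complex.I) = (Real.pi : ℂ) * Complex.I := by
        norm_num
      rw [h1, Complex.exp_pi_mul_I, hp, hq, neg_one_smul, ← sub_eq_add_neg, ← smul_sub]
      have h2 : (1 + X) - (1 - X) = (2 : ℂ) • X := by rw [two_smul]; abel
      rw [h2, smul_smul]
      norm_num
  refine ⟨hstar, hXX, hmem, hpath, ?_, ?_, ?_, ?_⟩
  · have hone : (star C₂ * C₂ + C₂ * star C₂) * (star C₁ * C₁) = star C₁ * C₁ := by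
      rw [hsum₂, one_mul]
    rw [← hone, hXdef]
    simp only [mul_add, add_mul, mul_assoc,
      c1, c2, c3, c4, c1', c2', c3', c4',
      n₁, m₁, p₁, q₁, n₂, m₂, p₂, q₂,
      r11', r12', r13', r14', r21', r22', r23', r24',
      zero_mul, mul_zero, add_zero, zero_add]
  · have hone : (star C₂ * C₂ + C₂ * star C₂) * (C₁ * star C₁) = C₁ * star C₁ := by
      rw [hsum₂, one_mul]
    rw [← hone, hXdef]
    simp only [mul_add, add_mul, mul_assoc,
      c1, c2, c3, c4, c1', c2', c3', c4',
      n₁, m₁, p₁, q₁, n₂, m₂, p₂, q₂,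
      r11', r12', r13', r14', r21', r22', r23', r24',
      zero_mul, mul_zero, add_zero, zero_add]
  · have hone : (star C₂ * C₂) * (star C₁ * C₁ + C₁ * star C₁) = star C₂ * C₂ := by
      rw [hsum₁, mul_one]
    rw [← hone, hXdef]
    simp only [mul_add, add_mul, mul_assoc,
      c1, c2, c3, c4, c1', c2', c3', c4',
      n₁, m₁, p₁, q₁, n₂, m₂, p₂, q₂,
      r11', r12', r13', r14', r21', r22', r23', r24',
      zero_mul, mul_zero, add_zero, zero_add]
  · have hone : (C₂ * star C₂) * (star C₁ * C₁ + C₁ * star C₁) = C₂ * star C₂ := by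
      rw [hsum₁, mul_one]
    rw [← hone, hXdef]
    simp only [mul_add, add_mul, mul_assoc,
      c1, c2, c3, c4, c1', c2', c3', c4',
      n₁, m₁, p₁, q₁, n₂, m₂, p₂, q₂,
      r11', r12', r13', r14', r21', r22', r23', r24',
      zero_mul, mul_zero, add_zero, zero_add]
end

section
/- Let F and G be C*-algebras and let φ : F → G be a surjective *-homomorphism. Then the *-homomorphism ψ : C([0,1], F) → C([0,1], G) defined by ψ(x) = φ ∘ x is surjective. -/
open scoped unitInterval

noncomputable section



/-- ReLU. -/
def stmt9r (s : ℝ) : ℝ := max s 0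

/-- hat function: second difference of ReLU. -/
def stmt9g (s : ℝ) : ℝ := stmt9r (s + 1) - 2 * stmt9r s + stmt9r (s - 1)

lemma stmt9r_of_nonneg {s : ℝ} (h : 0 ≤ s) : stmt9r s = s := max_eq_left h
lemma stmt9r_of_nonpos {s : ℝ} (h : s ≤ 0) : stmt9r s = 0 := max_eq_right h

lemma stmt9g_nonneg (s : ℝ) : 0 ≤ stmt9g s := by
  unfold stmt9g
  rcases le_total s (-1) with h | h
  · rw [stmt9r_of_nonpos (by linarith), stmt9r_of_nonpos (by linarith),
      stmt9r_of_nonpos (by linarith)]; linarith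
  rcases le_total s 0 with h2 | h2
  · rw [stmt9r_of_nonneg (by linarith), stmt9r_of_nonpos (by linarith),
      stmt9r_of_nonpos (by linarith)]; linarith
  rcases le_total s 1 with h3 | h3
  · rw [stmt9r_of_nonneg (by linarith), stmt9r_of_nonneg (by linarith),
      stmt9r_of_nonpos (by linarith)]; linarith
  · rw [stmt9r_of_nonneg (by linarith), stmt9r_of_nonneg (by linarith),
      stmt9r_of_nonneg (by linarith)]; linarith

lemma stmt9g_eq_zero {s : ℝ} (h : 1 ≤ |s|) : stmt9g s = 0 := by
  unfold stmt9g
  rcases le_or_gt 1 s with h1 | h1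
  · rw [stmt9r_of_nonneg (by linarith), stmt9r_of_nonneg (by linarith),
      stmt9r_of_nonneg (by linarith)]; ring
  · have h2 : s ≤ -1 := by
      rcases abs_cases s with ⟨he, _⟩ | ⟨he, _⟩ <;> linarith
    rw [stmt9r_of_nonpos (by linarith), stmt9r_of_nonpos (by linarith),
      stmt9r_of_nonpos (by linarith)]; ring

lemma stmt9g_continuous : Continuous stmt9g := by
  unfold stmt9g stmt9r; fun_prop

lemma stmt9g_sum (n : ℕ) (u : ℝ) (h0 : 0 ≤ u) (h1 : u ≤ n) :
    ∑ i ∈ Finset.range (n + 1), stmt9g (u - i) = 1 := by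
  have key : ∀ i : ℕ, stmt9g (u - i) =
      (stmt9r (u - i + 1) - stmt9r (u - i)) - (stmt9r (u - (i+1 : ℕ) + 1) - stmt9r (u - (i+1 : ℕ))) := by
    intro i
    have e1 : u - ((i : ℝ) + 1) + 1 = u - i := by ring
    have e2 : u - ((i : ℝ) + 1) = u - i - 1 := by ring
    push_cast
    rw [e1, e2]
    unfold stmt9g
    ring
  calc ∑ i ∈ Finset.range (n + 1), stmt9g (u - i)
      = ∑ i ∈ Finset.range (n + 1),
        ((fun j : ℕ => stmt9r (u - j + 1) - stmt9r (u - j)) i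
          - (fun j : ℕ => stmt9r (u - j + 1) - stmt9r (u - j)) (i + 1)) := by
        exact Finset.sum_congr rfl fun i _ => key i
    _ = (stmt9r (u - (0:ℕ) + 1) - stmt9r (u - (0:ℕ))) - (stmt9r (u - (n+1 : ℕ) + 1) - stmt9r (u - (n+1 : ℕ))) :=
        Finset.sum_range_sub' (fun j : ℕ => stmt9r (u - j + 1) - stmt9r (u - j)) (n+1)
    _ = 1 := by
        push_cast
        rw [stmt9r_of_nonneg (by linarith), stmt9r_of_nonneg (by linarith),
          stmt9r_of_nonpos (by linarith), stmt9r_of_nonpos (by linarith)]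
        ring




/-- A bounded linear map between Banach spaces which approximately lifts with
uniform norm control is surjective. -/
lemma stmt9_surj_of_approx {X Y : Type*} [NormedAddCommGroup X] [NormedSpace ℂ X]
    [NormedAddCommGroup Y] [NormedSpace ℂ Y] [CompleteSpace X]
    (T : X →L[ℂ] Y) (C : ℝ) (hC : 0 ≤ C)
    (h : ∀ z : Y, ∀ ε : ℝ, 0 < ε → ∃ x : X, ‖x‖ ≤ C * ‖z‖ ∧ ‖z - T x‖ ≤ ε) :
    Function.Surjective T := by
  intro y
  rcases eq_or_ne y 0 with rfl | hy0
  · exact ⟨0, by simp⟩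
  have hy : 0 < ‖y‖ := norm_pos_iff.mpr hy0
  choose sel hsel1 hsel2 using h
  -- recursively defined remainders
  let pos : ∀ n : ℕ, (0:ℝ) < ‖y‖ / 2 ^ (n + 1) := fun n => by positivity
  let yseq : ℕ → Y := fun n =>
    Nat.rec y (fun n z => z - T (sel z (‖y‖ / 2 ^ (n + 1)) (pos n))) n
  let xseq : ℕ → X := fun n => sel (yseq n) (‖y‖ / 2 ^ (n + 1)) (pos n)
  have hstep : ∀ n, yseq (n + 1) = yseq n - T (xseq n) := fun n => rfl
  have hynorm : ∀ n, ‖yseq n‖ ≤ ‖y‖ / 2 ^ n := by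
    intro n
    cases n with
    | zero => simp [yseq]
    | succ n =>
      rw [hstep n]
      exact hsel2 _ _ _
  have hxnorm : ∀ n, ‖xseq n‖ ≤ C * ‖y‖ * (1 / 2) ^ n := by
    intro n
    calc ‖xseq n‖ ≤ C * ‖yseq n‖ := hsel1 _ _ _
      _ ≤ C * (‖y‖ / 2 ^ n) := mul_le_mul_of_nonneg_left (hynorm n) hC
      _ = C * ‖y‖ * (1 / 2) ^ n := by rw [div_pow, one_pow]; ring
  have hsum : Summable xseq := by
    apply Summable.of_norm_bounded (summable_geometric_two.mul_left (C * ‖y‖)) hxnorm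
  refine ⟨∑' n, xseq n, ?_⟩
  have hTsum : HasSum (fun n => T (xseq n)) (T (∑' n, xseq n)) := hsum.hasSum.mapL T
  have htel : ∀ n, ∑ i ∈ Finset.range n, T (xseq i) = y - yseq n := by
    intro n
    have : ∀ i, T (xseq i) = yseq i - yseq (i + 1) := by
      intro i; rw [hstep i]; abel
    calc ∑ i ∈ Finset.range n, T (xseq i)
        = ∑ i ∈ Finset.range n, (yseq i - yseq (i + 1)) :=
          Finset.sum_congr rfl fun i _ => this i
      _ = yseq 0 - yseq n := Finset.sum_range_sub' yseq n
      _ = y - yseq n := rfl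
  have hlim : Filter.Tendsto (fun n => ∑ i ∈ Finset.range n, T (xseq i)) Filter.atTop (nhds y) := by
    have h0 : Filter.Tendsto yseq Filter.atTop (nhds 0) := by
      apply squeeze_zero_norm hynorm
      have : Filter.Tendsto (fun n : ℕ => ‖y‖ * (1/2) ^ n) Filter.atTop (nhds 0) := by
        simpa using (tendsto_pow_atTop_nhds_zero_of_lt_one (by norm_num : (0:ℝ) ≤ 1/2)
          (by norm_num)).const_mul ‖y‖
      refine this.congr fun n => ?_
      rw [div_pow, one_pow]; ring
    simpa using ((tendsto_const_nhds (x := y)).sub h0).congr fun n => (htel n).symm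
  exact tendsto_nhds_unique hTsum.tendsto_sum_nat hlim

lemma stmt9_approx {F G : Type*} [NonUnitalCStarAlgebra F] [NonUnitalCStarAlgebra G]
    (φL : F →L[ℂ] G) (C : ℝ) (hC : 0 < C)
    (hlift : ∀ g : G, ∃ f : F, φL f = g ∧ ‖f‖ ≤ C * ‖g‖)
    (y : C(unitInterval, G)) (ε : ℝ) (hε : 0 < ε) :
    ∃ x : C(unitInterval, F),
      ‖x‖ ≤ C * ‖y‖ ∧ ‖y - φL.compLeftContinuous ℂ unitInterval x‖ ≤ ε := by
  -- uniform continuity of y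
  have huc : UniformContinuous ⇑y := CompactSpace.uniformContinuous_of_continuous y.continuous
  obtain ⟨δ, hδ, Hδ⟩ := Metric.uniformContinuous_iff.mp huc ε hε
  obtain ⟨n, hn⟩ := exists_nat_gt (1 / δ)
  have hn0 : (0:ℝ) < n := lt_of_le_of_lt (by positivity) hn
  have hinv : 1 / (n:ℝ) < δ := by
    rw [div_lt_iff₀ hn0]
    rw [div_lt_iff₀ hδ] at hn
    linarith
  -- nodes and lifts
  set node : ℕ → unitInterval := fun i => Set.projIcc 0 1 zero_le_one ((i:ℝ) / n) with hnode
  choose f hf1 hf2 using fun i => hlift (y (node i))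
  have hf2' : ∀ i, ‖f i‖ ≤ C * ‖y‖ := fun i =>
    (hf2 i).trans (mul_le_mul_of_nonneg_left (y.norm_coe_le_norm (node i)) hC.le)
  -- the approximate lift
  set x : C(unitInterval, F) :=
    ⟨fun t => ∑ i ∈ Finset.range (n + 1), stmt9g ((n:ℝ) * t - i) • f i, by
      apply continuous_finset_sum
      intro i _
      exact ((stmt9g_continuous.comp (by fun_prop)).smul continuous_const)⟩ with hx
  have hxapply : ∀ t : unitInterval,
      x t = ∑ i ∈ Finset.range (n + 1), stmt9g ((n:ℝ) * t - i) • f i := fun t => rfl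
  have hu : ∀ t : unitInterval, 0 ≤ (n:ℝ) * t ∧ (n:ℝ) * t ≤ n := by
    intro t
    constructor
    · exact mul_nonneg hn0.le t.2.1
    · calc (n:ℝ) * t ≤ (n:ℝ) * 1 := mul_le_mul_of_nonneg_left t.2.2 hn0.le
        _ = n := mul_one _
  have hsum1 : ∀ t : unitInterval,
      ∑ i ∈ Finset.range (n + 1), stmt9g ((n:ℝ) * t - i) = 1 := fun t =>
    stmt9g_sum n _ (hu t).1 (hu t).2
  refine ⟨x, ?_, ?_⟩
  · rw [ContinuousMap.norm_le x (by positivity)]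
    intro t
    rw [hxapply]
    calc ‖∑ i ∈ Finset.range (n + 1), stmt9g ((n:ℝ) * t - i) • f i‖
        ≤ ∑ i ∈ Finset.range (n + 1), ‖stmt9g ((n:ℝ) * t - i) • f i‖ :=
          norm_sum_le _ _
      _ ≤ ∑ i ∈ Finset.range (n + 1), stmt9g ((n:ℝ) * t - i) * (C * ‖y‖) := by
          apply Finset.sum_le_sum
          intro i _
          rw [norm_smul, Real.norm_eq_abs, abs_of_nonneg (stmt9g_nonneg _)]
          exact mul_le_mul_of_nonneg_left (hf2' i) (stmt9g_nonneg _)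
      _ = C * ‖y‖ := by rw [← Finset.sum_mul, hsum1 t, one_mul]
  · rw [ContinuousMap.norm_le _ hε.le]
    intro t
    rw [ContinuousMap.sub_apply, show (φL.compLeftContinuous ℂ unitInterval x) t = φL (x t) from rfl, hxapply,
      map_sum]
    have hmap : ∀ i ∈ Finset.range (n + 1),
        φL (stmt9g ((n:ℝ) * t - i) • f i) = stmt9g ((n:ℝ) * t - i) • y (node i) := by
      intro i _
      rw [φL.map_smul_of_tower, hf1]
    rw [Finset.sum_congr rfl hmap]
    have hyt : y t = ∑ i ∈ Finset.range (n + 1), stmt9g ((n:ℝ) * t - i) • y t := by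
      rw [← Finset.sum_smul, hsum1 t, one_smul]
    have hrw : ∑ i ∈ Finset.range (n + 1), stmt9g ((n:ℝ) * t - i) • (y t - y (node i))
        = y t - ∑ i ∈ Finset.range (n + 1), stmt9g ((n:ℝ) * t - i) • y (node i) := by
      simp only [smul_sub, Finset.sum_sub_distrib, ← Finset.sum_smul, hsum1 t, one_smul]
    calc ‖y t - ∑ i ∈ Finset.range (n + 1), stmt9g ((n:ℝ) * t - i) • y (node i)‖
        = ‖∑ i ∈ Finset.range (n + 1), stmt9g ((n:ℝ) * t - i) • (y t - y (node i))‖ := by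
          rw [hrw]
      _ ≤ ∑ i ∈ Finset.range (n + 1), ‖stmt9g ((n:ℝ) * t - i) • (y t - y (node i))‖ :=
          norm_sum_le _ _
      _ ≤ ∑ i ∈ Finset.range (n + 1), stmt9g ((n:ℝ) * t - i) * ε := by
          apply Finset.sum_le_sum
          intro i hi
          rw [norm_smul, Real.norm_eq_abs, abs_of_nonneg (stmt9g_nonneg _)]
          rcases eq_or_ne (stmt9g ((n:ℝ) * t - i)) 0 with h0 | h0
          · rw [h0]; simp
          · apply mul_le_mul_of_nonneg_left _ (stmt9g_nonneg _)
            have habs : |(n:ℝ) * t - i| < 1 := by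
              by_contra hcon
              exact h0 (stmt9g_eq_zero (not_lt.mp hcon))
            have hmem : (i:ℝ) / n ∈ Set.Icc (0:ℝ) 1 := by
              constructor
              · positivity
              · rw [div_le_one hn0]
                exact_mod_cast Nat.cast_le.mpr (Nat.lt_succ_iff.mp (Finset.mem_range.mp hi))
            have hnodev : ((node i : unitInterval) : ℝ) = (i:ℝ) / n := by
              rw [hnode]
              exact congrArg _ (Set.projIcc_of_mem zero_le_one hmem)
            have hdist : dist t (node i) < δ := by
              rw [Subtype.dist_eq, Real.dist_eq, hnodev]
              have : (t:ℝ) - (i:ℝ)/n = ((n:ℝ) * t - i) / n := by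
                field_simp
              rw [this, abs_div, abs_of_pos hn0]
              calc |(n:ℝ) * t - i| / n < 1 / n := by
                    exact (div_lt_div_iff_of_pos_right hn0).mpr habs
                _ < δ := hinv
            have := Hδ hdist
            rw [← dist_eq_norm]
            exact this.le
      _ = ε := by rw [← Finset.sum_mul, hsum1 t, one_mul]

/-- If `φ : F → G` is a surjective *-homomorphism of C*-algebras, then
the induced *-homomorphism `ψ : C([0,1], F) → C([0,1], G)`, `ψ(x) = φ ∘ x`, is
surjective. -/
theorem stmt_9 {F G : Type*} [NonUnitalCStarAlgebra F] [NonUnitalCStarAlgebra G]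
    (φ : F →⋆ₙₐ[ℂ] G) (hφ : Function.Surjective φ) :
    ∀ y : C(unitInterval, G), ∃ x : C(unitInterval, F), ∀ t, φ (x t) = y t := by
  have hcont : Continuous ⇑φ :=
    AddMonoidHomClass.continuous_of_bound φ 1
      (fun a => by simpa using NonUnitalStarAlgHom.norm_apply_le φ a)
  let φL : F →L[ℂ] G :=
    ⟨{ toFun := ⇑φ, map_add' := fun a b => map_add φ a b,
       map_smul' := fun c a => map_smul φ c a }, hcont⟩
  have hφL : Function.Surjective ⇑φL := hφ
  obtain ⟨C, hC, hlift⟩ := φL.exists_preimage_norm_le hφL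
  have hsurj : Function.Surjective ⇑(φL.compLeftContinuous ℂ unitInterval) := by
    refine stmt9_surj_of_approx _ C hC.le fun z ε hε => ?_
    obtain ⟨x, h1, h2⟩ := stmt9_approx φL C hC hlift z ε hε
    exact ⟨x, h1, h2⟩
  intro y
  obtain ⟨x, hx⟩ := hsurj y
  exact ⟨x, fun t => by
    have := congrArg (fun z => z t) hx
    exact this⟩

end
end

section
/- Let S be a finite group. In the metric space f(S, ℂ) of Schur ℂ-functions for S, equipped with the metric d_S(g, h) := sup{|g(s,t) − h(s,t)| : s, t ∈ S}, the set of coboundaries {δλ : λ ∈ Λ(S, ℂ)} is an open subset. -/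
/-- A Schur `ℂ`-function for a group `S`: a unit-circle-valued two-cocycle normalized
at the identity. -/
def IsSchur {S : Type*} [Group S] (g : S × S → ℂ) : Prop :=
  (∀ p, ‖g p‖ = 1) ∧ g (1, 1) = 1 ∧
    ∀ r s t : S, g (r, s) * g (r * s, t) = g (r, s * t) * g (s, t)

/-- A coboundary `δλ` for `λ : S → ℂ` unit-circle-valued with `λ(1) = 1`. -/
def IsSchurCoboundary {S : Type*} [Group S] (g : S × S → ℂ) : Prop :=
  ∃ lam : S → ℂ, (∀ s, ‖lam s‖ = 1) ∧ lam 1 = 1 ∧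
    ∀ p : S × S, g p = lam p.1 * lam p.2 * (starRingEnd ℂ) (lam (p.1 * p.2))

open Complex in
lemma exp_arg_of_norm_one (z : ℂ) (h : ‖z‖ = 1) : Complex.exp (z.arg * I) = z := by
  have := Complex.norm_mul_exp_arg_mul_I z
  have h := h
  rw [h] at this; simpa using this

open Complex in
lemma abs_arg_lt (z : ℂ) (h1 : ‖z‖ = 1) (h2 : ‖z - 1‖ < 1) : |z.arg| < Real.pi / 2 := by
  rw [Complex.abs_arg_lt_pi_div_two_iff]
  left
  have h3 : Complex.normSq (z - 1) < 1 := by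
    have := Complex.sq_norm (z - 1)
    nlinarith [norm_nonneg (z-1), h2]
  have h4 : Complex.normSq z = 1 := by
    have := Complex.sq_norm z
    nlinarith [h1]
  simp [Complex.normSq_apply, Complex.sub_re, Complex.sub_im] at h3 h4
  nlinarith

open Complex in
/-- A Schur cocycle uniformly within distance 1 of the constant 1 is a coboundary. -/
lemma isSchurCoboundary_of_close {S : Type*} [Group S] [Fintype S]
    (h : S × S → ℂ) (hs : IsSchur h) (hb : ∀ p, ‖h p - 1‖ < 1) :
    IsSchurCoboundary h := by
  obtain ⟨hnorm, hone, hcoc⟩ := hs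
  set θ : S × S → ℝ := fun p => (h p).arg with hθ
  have hexp : ∀ p, Complex.exp (θ p * I) = h p := fun p => exp_arg_of_norm_one _ (hnorm p)
  have habs : ∀ p, |θ p| < Real.pi / 2 := fun p => abs_arg_lt _ (hnorm p) (hb p)
  have hπ : (0:ℝ) < Real.pi := Real.pi_pos
  -- exact real cocycle identity
  have hθcoc : ∀ r s t : S, θ (r, s) + θ (r * s, t) = θ (r, s * t) + θ (s, t) := by
    intro r s t
    have he : Complex.exp ((θ (r,s) : ℂ) * I + (θ (r*s,t) : ℂ) * I)
        = Complex.exp ((θ (r,s*t) : ℂ) * I + (θ (s,t) : ℂ) * I) := by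
      rw [Complex.exp_add, Complex.exp_add, hexp, hexp, hexp, hexp]
      exact hcoc r s t
    rw [Complex.exp_eq_exp_iff_exists_int] at he
    obtain ⟨n, hn⟩ := he
    have him : θ (r,s) + θ (r*s,t) = θ (r,s*t) + θ (s,t) + n * (2 * Real.pi) := by
      have := congrArg Complex.im hn
      simpa using this
    have hn0 : n = 0 := by
      have b1 := abs_lt.mp (habs (r,s)); have b2 := abs_lt.mp (habs (r*s,t))
      have b3 := abs_lt.mp (habs (r, s*t)); have b4 := abs_lt.mp (habs (s,t))
      have hr : |(n : ℝ)| < 1 := by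
        rw [abs_lt]
        constructor <;> nlinarith
      have h2 : |n| < 1 := by exact_mod_cast hr
      have := abs_lt.mp h2
      omega
    rw [hn0] at him
    simpa using him
  -- h(1,t) = 1, so θ(1,t) = 0
  have hθ1 : ∀ t : S, θ (1, t) = 0 := by
    intro t
    have hne : h (1, t) ≠ 0 := by
      intro hz; have := hnorm (1,t); rw [hz] at this; simp at this
    have hc := hcoc 1 1 t
    simp only [one_mul, hone] at hc
    have hc' : (1:ℂ) * h (1, t) = h (1, t) * h (1, t) := by rw [one_mul]; exact hc
    have h1t : h (1, t) = 1 := (mul_right_cancel₀ hne hc').symm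
    simp [hθ, h1t]
  -- define μ
  set n := (Fintype.card S : ℝ) with hn
  have hnpos : (0:ℝ) < n := by
    simp [hn]; exact Fintype.card_pos
  set μ : S → ℝ := fun s => (∑ t, θ (s, t)) / n with hμ
  have hμ1 : μ 1 = 0 := by
    simp [hμ, hθ1]
  have hkey : ∀ r s : S, θ (r, s) = μ r + μ s - μ (r * s) := by
    intro r s
    have hsum : n * θ (r, s) + ∑ t, θ (r*s, t) = (∑ t, θ (r, t)) + ∑ t, θ (s, t) := by
      have h1 : ∑ t, (θ (r, s) + θ (r*s, t)) = ∑ t, (θ (r, s*t) + θ (s, t)) := by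
        apply Finset.sum_congr rfl
        intro t _
        exact hθcoc r s t
      have h2 : ∑ t, θ (r, s*t) = ∑ t, θ (r, t) :=
        Fintype.sum_equiv (Equiv.mulLeft s) _ _ (fun t => rfl)
      rw [Finset.sum_add_distrib, Finset.sum_add_distrib, Finset.sum_const,
        Finset.card_univ, h2] at h1
      rw [← h1]
      push_cast [hn]
      ring
    have hne : n ≠ 0 := ne_of_gt hnpos
    simp only [hμ]
    rw [← add_div, div_sub_div_same, eq_div_iff hne]
    linarith [hsum, mul_comm n (θ (r, s))]
  refine ⟨fun s => Complex.exp (μ s * I), ?_, ?_, ?_⟩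
  · intro s
    simpa using Complex.abs_exp_ofReal_mul_I (μ s)
  · simp [hμ1]
  · rintro ⟨s, t⟩
    have hc : (starRingEnd ℂ) (Complex.exp (μ (s*t) * I)) = Complex.exp (-(μ (s*t)) * I) := by
      rw [← Complex.exp_conj]
      congr 1
      simp
    simp only [hc]
    rw [← hexp (s, t)]
    rw [← Complex.exp_add, ← Complex.exp_add]
    congr 1
    have := hkey s t
    push_cast [this]
    ring

open Complex in
/-- A Schur cocycle uniformly within distance 1 of a coboundary is a coboundary. -/
lemma isSchurCoboundary_of_close_to_coboundary {S : Type*} [Group S] [Fintype S]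
    (g h : S × S → ℂ) (hg : IsSchurCoboundary g) (hh : IsSchur h)
    (hb : ∀ p, ‖h p - g p‖ < 1) : IsSchurCoboundary h := by
  obtain ⟨lam, hlnorm, hl1, hlδ⟩ := hg
  set δ : S × S → ℂ := fun p => lam p.1 * lam p.2 * (starRingEnd ℂ) (lam (p.1 * p.2)) with hδdef
  have unit : ∀ s : S, lam s * (starRingEnd ℂ) (lam s) = 1 := by
    intro s
    rw [Complex.mul_conj]
    have : ‖lam s‖ = 1 := hlnorm s
    rw [← Complex.sq_norm, this]; norm_num
  have hδnorm : ∀ p, ‖δ p‖ = 1 := by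
    intro p
    show ‖lam p.1 * lam p.2 * (starRingEnd ℂ) (lam (p.1 * p.2))‖ = 1
    rw [norm_mul, norm_mul, RCLike.norm_conj, hlnorm, hlnorm, hlnorm]
    norm_num
  have hδcoc : ∀ r s t : S, δ (r, s) * δ (r * s, t) = δ (r, s * t) * δ (s, t) := by
    intro r s t
    show lam r * lam s * (starRingEnd ℂ) (lam (r * s)) *
        (lam (r * s) * lam t * (starRingEnd ℂ) (lam (r * s * t)))
      = lam r * lam (s * t) * (starRingEnd ℂ) (lam (r * (s * t))) *
        (lam s * lam t * (starRingEnd ℂ) (lam (s * t)))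
    rw [← mul_assoc r s t]
    linear_combination (lam r * lam s * lam t * (starRingEnd ℂ) (lam (r * s * t))) * unit (r * s)
      - (lam r * lam s * lam t * (starRingEnd ℂ) (lam (r * s * t))) * unit (s * t)
  obtain ⟨hhnorm, hhone, hhcoc⟩ := hh
  set k : S × S → ℂ := fun p => h p * (starRingEnd ℂ) (δ p) with hkdef
  have hδunit : ∀ p, δ p * (starRingEnd ℂ) (δ p) = 1 := by
    intro p
    rw [Complex.mul_conj]
    have : ‖δ p‖ = 1 := hδnorm p
    rw [← Complex.sq_norm, this]; norm_num
  have hks : IsSchur k := by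
    refine ⟨?_, ?_, ?_⟩
    · intro p
      show ‖h p * (starRingEnd ℂ) (δ p)‖ = 1
      rw [norm_mul, RCLike.norm_conj, hhnorm, hδnorm, mul_one]
    · show h (1, 1) * (starRingEnd ℂ) (δ (1, 1)) = 1
      have hδ11 : δ (1, 1) = 1 := by
        show lam 1 * lam 1 * (starRingEnd ℂ) (lam (1 * 1)) = 1
        rw [one_mul, hl1, map_one]; norm_num
      rw [hhone, hδ11, map_one, mul_one]
    · intro r s t
      show h (r, s) * (starRingEnd ℂ) (δ (r, s)) * (h (r * s, t) * (starRingEnd ℂ) (δ (r * s, t)))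
        = h (r, s * t) * (starRingEnd ℂ) (δ (r, s * t)) * (h (s, t) * (starRingEnd ℂ) (δ (s, t)))
      have e2 : (starRingEnd ℂ) (δ (r, s)) * (starRingEnd ℂ) (δ (r * s, t))
          = (starRingEnd ℂ) (δ (r, s * t)) * (starRingEnd ℂ) (δ (s, t)) := by
        rw [← map_mul, ← map_mul, hδcoc r s t]
      linear_combination (h (r, s) * h (r * s, t)) * e2
        + ((starRingEnd ℂ) (δ (r, s * t)) * (starRingEnd ℂ) (δ (s, t))) * hhcoc r s t
  have hkb : ∀ p, ‖k p - 1‖ < 1 := by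
    intro p
    have heq : k p - 1 = (h p - g p) * (starRingEnd ℂ) (δ p) := by
      have hg' : g p = δ p := hlδ p
      show h p * (starRingEnd ℂ) (δ p) - 1 = (h p - g p) * (starRingEnd ℂ) (δ p)
      rw [hg']
      linear_combination hδunit p
    rw [heq, norm_mul, RCLike.norm_conj, hδnorm p, mul_one]
    exact hb p
  obtain ⟨lam', hl'norm, hl'1, hl'δ⟩ := isSchurCoboundary_of_close k hks hkb
  refine ⟨fun s => lam s * lam' s, ?_, ?_, ?_⟩
  · intro s
    show ‖lam s * lam' s‖ = 1
    rw [norm_mul, hlnorm, hl'norm, mul_one]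
  · show lam 1 * lam' 1 = 1
    rw [hl1, hl'1, mul_one]
  · intro p
    have hhp : h p = k p * δ p := by
      show h p = h p * (starRingEnd ℂ) (δ p) * δ p
      linear_combination - h p * hδunit p
    rw [hhp, hl'δ p]
    show lam' p.1 * lam' p.2 * (starRingEnd ℂ) (lam' (p.1 * p.2))
        * (lam p.1 * lam p.2 * (starRingEnd ℂ) (lam (p.1 * p.2)))
      = lam p.1 * lam' p.1 * (lam p.2 * lam' p.2)
        * (starRingEnd ℂ) (lam (p.1 * p.2) * lam' (p.1 * p.2))
    rw [map_mul]
    ring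

/-- For a finite group `S`, the set of coboundaries is open in the
metric space of Schur `ℂ`-functions for `S` (with the supremum metric, i.e. the
subspace metric of the finite product `S × S → ℂ`). -/
theorem stmt_13 {S : Type*} [Group S] [Fintype S] :
    IsOpen {g : {f : S × S → ℂ // IsSchur f} | IsSchurCoboundary g.1} := by
  rw [Metric.isOpen_iff]
  intro g hg
  refine ⟨1, one_pos, ?_⟩
  intro h hball
  rw [Metric.mem_ball] at hball
  apply isSchurCoboundary_of_close_to_coboundary g.1 h.1 hg h.2
  intro p
  calc ‖h.1 p - g.1 p‖ = dist (h.1 p) (g.1 p) := (dist_eq_norm _ _).symm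
    _ ≤ dist h.1 g.1 := dist_le_pi_dist h.1 g.1 p
    _ = dist h g := (Subtype.dist_eq h g).symm
    _ < 1 := hball
end

section
/- Let S be a finite group, Ω a totally disconnected compact Hausdorff space, and g a Schur C(Ω,ℂ)-function for S. Then there exists a map λ : S → C(Ω,ℂ) whose values are unitary elements of C(Ω,ℂ) with λ(1) = 1, such that for all s, t ∈ S the continuous function g(s,t)·λ(s)·λ(t)·(λ(st))* : Ω → ℂ has finite range. -/
/-- A Schur `C(Ω, ℂ)`-function for a group `S`: a normalized two-cocycle with values
that are unitary elements of `C(Ω, ℂ)` (i.e. unit-circle valued functions). -/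
def IsSchurFun {S : Type*} [Group S] {Ω : Type*} [TopologicalSpace Ω]
    (g : S → S → C(Ω, ℂ)) : Prop :=
  (∀ s t : S, ∀ ω, ‖g s t ω‖ = 1) ∧ g 1 1 = 1 ∧
    ∀ r s t : S, g r s * g (r * s) t = g r (s * t) * g s t


lemma finite_range_approx {Ω : Type*} [TopologicalSpace Ω] [CompactSpace Ω] [T2Space Ω]
    [TotallyDisconnectedSpace Ω] (f : C(Ω, ℂ)) (hf : ∀ ω, ‖f ω‖ = 1) :
    ∃ u : Ω → ℂ, Continuous u ∧ (Set.range u).Finite ∧ (∀ ω, ‖u ω‖ = 1) ∧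
      ∀ ω, ‖f ω - u ω‖ < 1 := by
  classical
  have hV : ∀ ω : Ω, ∃ V : Set Ω, IsClopen V ∧ ω ∈ V ∧ V ⊆ f ⁻¹' Metric.ball (f ω) 1 :=
    fun ω => compact_exists_isClopen_in_isOpen
      (Metric.isOpen_ball.preimage f.continuous) (by simp [Metric.mem_ball])
  choose V hVclopen hVmem hVsub using hV
  obtain ⟨F, hF⟩ := isCompact_univ.elim_finite_subcover V (fun ω => (hVclopen ω).isOpen)
    (fun ω _ => Set.mem_iUnion.mpr ⟨ω, hVmem ω⟩)
  set π : Ω → (F → Bool) := fun ω i => (V (i : Ω)).boolIndicator ω with hπ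
  have hπcont : Continuous π :=
    continuous_pi fun i => (continuous_boolIndicator_iff_isClopen _).mpr (hVclopen _)
  set c : (F → Bool) → ℂ := fun b => if h : ∃ i : F, b i = true then f (h.choose : Ω) else 1
    with hc
  refine ⟨c ∘ π, ?_, ?_, ?_, ?_⟩
  · exact (continuous_of_discreteTopology).comp hπcont
  · exact (Set.finite_range c).subset (Set.range_comp_subset_range π c)
  · intro ω
    have hex : ∃ i : F, π ω i = true := by
      obtain ⟨i, hiF, hi⟩ := Set.mem_iUnion₂.mp (hF (Set.mem_univ ω))
      exact ⟨⟨i, hiF⟩, ((V i).mem_iff_boolIndicator ω).mp hi⟩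
    simp only [Function.comp_apply, hc, dif_pos hex]
    exact hf _
  · intro ω
    have hex : ∃ i : F, π ω i = true := by
      obtain ⟨i, hiF, hi⟩ := Set.mem_iUnion₂.mp (hF (Set.mem_univ ω))
      exact ⟨⟨i, hiF⟩, ((V i).mem_iff_boolIndicator ω).mp hi⟩
    simp only [Function.comp_apply, hc, dif_pos hex]
    have hmem : ω ∈ V (hex.choose : Ω) :=
      ((V _).mem_iff_boolIndicator ω).mpr hex.choose_spec
    have := hVsub _ hmem
    simpa [Metric.mem_ball, dist_eq_norm] using this

lemma exists_root {Ω : Type*} [TopologicalSpace Ω] [CompactSpace Ω] [T2Space Ω]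
    [TotallyDisconnectedSpace Ω] (f : C(Ω, ℂ)) (hf : ∀ ω, ‖f ω‖ = 1) (n : ℕ) (hn : 0 < n) :
    ∃ lam : C(Ω, ℂ), (∀ ω, ‖lam ω‖ = 1) ∧
      (Set.range fun ω => lam ω ^ n * f ω).Finite := by
  obtain ⟨u, hu_cont, hu_fin, hu_norm, hu_close⟩ := finite_range_approx f hf
  set z : Ω → ℂ := fun ω => f ω * (starRingEnd ℂ) (u ω) with hz
  have hz_cont : Continuous z := f.continuous.mul (Complex.continuous_conj.comp hu_cont)
  have hz_abs : ∀ ω, ‖z ω‖ = 1 := by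
    intro ω
    simp only [hz, norm_mul, Complex.norm_conj]
    rw [hf, hu_norm, one_mul]
  have hz_ne : ∀ ω, z ω ≠ 0 := by
    intro ω h
    have := hz_abs ω
    rw [h] at this
    simp at this
  have hz_slit : ∀ ω, z ω ∈ Complex.slitPlane := by
    intro ω
    have h1 : ‖z ω - 1‖ < 1 := by
      have : z ω - 1 = (starRingEnd ℂ) (u ω) * (f ω - u ω) := by
        have : (starRingEnd ℂ) (u ω) * u ω = 1 := by
          rw [mul_comm, Complex.mul_conj, Complex.normSq_eq_norm_sq,
            hu_norm]
          norm_num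
        rw [mul_sub, this]; simp only [hz]; ring
      rw [this, norm_mul, Complex.norm_conj,
        hu_norm, one_mul]
      exact hu_close ω
    have h2 : |(z ω - 1).re| ≤ ‖z ω - 1‖ := Complex.abs_re_le_norm _
    have h3 : (z ω - 1).re = (z ω).re - 1 := by simp
    refine Complex.mem_slitPlane_iff.mpr (Or.inl ?_)
    have := abs_lt.mp (lt_of_le_of_lt h2 h1)
    rw [h3] at this
    linarith [this.1]
  set θ : Ω → ℝ := fun ω => -(Complex.arg (z ω)) / n with hθ
  have hθ_cont : Continuous θ := by
    rw [continuous_iff_continuousAt]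
    intro ω
    exact (((Complex.continuousAt_arg (hz_slit ω)).comp hz_cont.continuousAt).neg).div_const _
  refine ⟨⟨fun ω => Complex.exp (θ ω * Complex.I), by fun_prop⟩, ?_, ?_⟩
  · intro ω
    simp only [ContinuousMap.coe_mk]
    exact Complex.norm_exp_ofReal_mul_I _
  · have key : ∀ ω, (Complex.exp (θ ω * Complex.I)) ^ n * f ω = u ω := by
      intro ω
      rw [← Complex.exp_nat_mul]
      have h1 : (n : ℂ) * (θ ω * Complex.I) = (-(Complex.arg (z ω)) : ℝ) * Complex.I := by
        have hn' : (n : ℂ) ≠ 0 := Nat.cast_ne_zero.mpr hn.ne'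
        rw [hθ]
        push_cast
        field_simp
      rw [h1]
      have h2 : Complex.exp ((-(Complex.arg (z ω)) : ℝ) * Complex.I) = (z ω)⁻¹ := by
        push_cast
        rw [neg_mul, Complex.exp_neg]
        congr 1
        have := Complex.norm_mul_exp_arg_mul_I (z ω)
        rw [hz_abs ω] at this
        simpa using this
      rw [h2, Complex.inv_eq_conj (hz_abs ω), hz, map_mul, Complex.conj_conj]
      have : (starRingEnd ℂ) (f ω) * f ω = 1 := by
        rw [mul_comm, Complex.mul_conj, Complex.normSq_eq_norm_sq, hf]
        norm_num
      calc (starRingEnd ℂ) (f ω) * u ω * f ω = ((starRingEnd ℂ) (f ω) * f ω) * u ω := by ring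
        _ = u ω := by rw [this, one_mul]
    refine Set.Finite.subset hu_fin ?_
    rintro x ⟨ω, rfl⟩
    simp only [ContinuousMap.coe_mk]
    rw [key ω]
    exact Set.mem_range_self ω

/-- Let `S` be a finite group, `Ω` a totally disconnected compact
Hausdorff space, and `g` a Schur `C(Ω, ℂ)`-function for `S`.  Then there is
`λ : S → C(Ω, ℂ)` with unitary values and `λ(1) = 1` such that each function
`g(s,t)·λ(s)·λ(t)·(λ(st))* : Ω → ℂ` has finite range. -/
theorem stmt_17 {S : Type*} [Group S] [Fintype S]
    {Ω : Type*} [TopologicalSpace Ω] [CompactSpace Ω] [T2Space Ω]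
    [TotallyDisconnectedSpace Ω]
    (g : S → S → C(Ω, ℂ)) (hg : IsSchurFun g) :
    ∃ lam : S → C(Ω, ℂ), (∀ s : S, ∀ ω, ‖lam s ω‖ = 1) ∧ lam 1 = 1 ∧
      ∀ s t : S,
        (Set.range fun ω => g s t ω * lam s ω * lam t ω *
          (starRingEnd ℂ) (lam (s * t) ω)).Finite := by
  classical
  obtain ⟨hnorm, hone, hcoc⟩ := hg
  set n := Fintype.card S with hn
  have hnpos : 0 < n := Fintype.card_pos
  have hcoc' : ∀ r s t : S, ∀ ω, g r s ω * g (r * s) t ω = g r (s * t) ω * g s t ω := by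
    intro r s t ω
    have := congrFun (congrArg DFunLike.coe (hcoc r s t)) ω
    simpa using this
  set F : S → C(Ω, ℂ) := fun s => ∏ t : S, g s t with hF
  have hFapp : ∀ s ω, F s ω = ∏ t : S, g s t ω := by
    intro s ω
    simp [hF]
  have hFnorm : ∀ s ω, ‖F s ω‖ = 1 := by
    intro s ω
    rw [hFapp, norm_prod]
    exact Finset.prod_eq_one fun t _ => hnorm s t ω
  have hFne : ∀ s ω, F s ω ≠ 0 := fun s ω h => by
    have := hFnorm s ω; rw [h] at this; simp at this
  have hgne : ∀ s t ω, g s t ω ≠ 0 := fun s t ω h => by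
    have := hnorm s t ω; rw [h] at this; simp at this
  -- key identity
  have hkey : ∀ s t : S, ∀ ω, g s t ω ^ n * F (s * t) ω = F s ω * F t ω := by
    intro s t ω
    have h1 : ∏ u : S, (g s t ω * g (s * t) u ω) = ∏ u : S, (g s (t * u) ω * g t u ω) :=
      Finset.prod_congr rfl fun u _ => hcoc' s t u ω
    rw [Finset.prod_mul_distrib, Finset.prod_mul_distrib, Finset.prod_const,
      Finset.card_univ] at h1
    have h2 : ∏ u : S, g s (t * u) ω = ∏ v : S, g s v ω :=
      Fintype.prod_equiv (Equiv.mulLeft t) _ _ fun u => rfl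
    rw [h2] at h1
    rw [hFapp, hFapp, hFapp]
    exact h1
  -- g 1 t = 1
  have hg1 : ∀ t : S, ∀ ω, g 1 t ω = 1 := by
    intro t ω
    have h1 := hcoc' 1 1 t ω
    have h11 : g 1 1 ω = 1 := by rw [hone]; simp
    rw [h11, one_mul, one_mul, one_mul] at h1
    exact (mul_right_cancel₀ (hgne 1 t ω) (by rw [one_mul]; exact h1)).symm
  have hF1 : ∀ ω, F 1 ω = 1 := by
    intro ω
    rw [hFapp]
    exact Finset.prod_eq_one fun t _ => hg1 t ω
  -- choose roots
  have hroot := fun s : S => exists_root (F s) (hFnorm s) n hnpos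
  choose lam0 hlam0norm hlam0fin using hroot
  set lam : S → C(Ω, ℂ) := fun s => if s = 1 then 1 else lam0 s with hlam
  have hlamnorm : ∀ s : S, ∀ ω, ‖lam s ω‖ = 1 := by
    intro s ω
    by_cases h : s = 1 <;> simp [hlam, h, hlam0norm s ω]
  have hlamne : ∀ s ω, lam s ω ≠ 0 := fun s ω h => by
    have := hlamnorm s ω; rw [h] at this; simp at this
  set A : S → Ω → ℂ := fun s ω => lam s ω ^ n * F s ω with hA
  have hAfin : ∀ s : S, (Set.range (A s)).Finite := by
    intro s
    by_cases h : s = 1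
    · refine Set.Finite.subset (Set.finite_singleton 1) ?_
      rintro x ⟨ω, rfl⟩
      simp [hA, hlam, h, hF1 ω]
    · have := hlam0fin s
      refine Set.Finite.subset this ?_
      rintro x ⟨ω, rfl⟩
      refine ⟨ω, ?_⟩
      simp [hA, hlam, h]
  have hAne : ∀ s ω, A s ω ≠ 0 := fun s ω =>
    mul_ne_zero (pow_ne_zero _ (hlamne s ω)) (hFne s ω)
  refine ⟨lam, hlamnorm, by simp [hlam], ?_⟩
  intro s t
  set H : Ω → ℂ := fun ω => g s t ω * lam s ω * lam t ω *
    (starRingEnd ℂ) (lam (s * t) ω) with hH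
  have hHn : ∀ ω, H ω ^ n = A s ω * A t ω * (A (s * t) ω)⁻¹ := by
    intro ω
    have habs : ‖lam (s * t) ω‖ = 1 := by
      exact hlamnorm _ ω
    have hconj : (starRingEnd ℂ) (lam (s * t) ω) = (lam (s * t) ω)⁻¹ :=
      (Complex.inv_eq_conj habs).symm
    have hgn : g s t ω ^ n = F s ω * F t ω * (F (s * t) ω)⁻¹ := by
      rw [eq_mul_inv_iff_mul_eq₀ (hFne (s * t) ω)]
      exact hkey s t ω
    rw [hH]
    simp only [hconj]
    rw [mul_pow, mul_pow, mul_pow, inv_pow, hgn, hA]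
    field_simp
  -- finiteness
  have hBfin : (Set.range fun ω => A s ω * A t ω * (A (s * t) ω)⁻¹).Finite := by
    have h3 : (Set.range fun ω => (A (s * t) ω)⁻¹).Finite := by
      refine Set.Finite.subset ((hAfin (s * t)).image Inv.inv) ?_
      rintro x ⟨ω, rfl⟩
      exact ⟨A (s * t) ω, ⟨ω, rfl⟩, rfl⟩
    refine Set.Finite.subset (Set.Finite.image2 (· * ·)
      (Set.Finite.image2 (· * ·) (hAfin s) (hAfin t)) h3) ?_
    rintro x ⟨ω, rfl⟩
    exact Set.mem_image2_of_mem (Set.mem_image2_of_mem ⟨ω, rfl⟩ ⟨ω, rfl⟩) ⟨ω, rfl⟩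
  have hroots : ∀ w : ℂ, {x : ℂ | x ^ n = w}.Finite := by
    intro w
    refine Set.Finite.ofFinset (Polynomial.nthRoots n w).toFinset fun x => ?_
    simp [Polynomial.mem_nthRoots hnpos]
  refine Set.Finite.subset (hBfin.biUnion fun w _ => hroots w) ?_
  rintro x ⟨ω, rfl⟩
  refine Set.mem_biUnion ⟨ω, rfl⟩ ?_
  simp only [Set.mem_setOf_eq]
  exact hHn ω
end

section
/- Let Ω be a locally compact Hausdorff space, Ω* = Ω ∪ {∞} its Alexandroff (one-point) compactification, and (ϑ_s)_{s ∈ (0,1]} a family of proper continuous maps Ω → Ω; for each s let ϑ_s* : Ω* → Ω* denote the continuous extension of ϑ_s with ϑ_s*(∞) = ∞. Assume: (1) the map Ω* × (0,1] → Ω*, (ω, s) ↦ ϑ_s*(ω), is continuous; (2) ϑ₁(ω) = ω for every ω ∈ Ω; (3) for every compact set Γ ⊆ Ω there is ε ∈ (0,1] such that Γ ∩ ϑ_s(Ω) = ∅ for all s ∈ (0, ε). For s ∈ (0,1] define φ_s : C₀(Ω, ℂ) → C₀(Ω, ℂ) by φ_s(x) = x ∘ ϑ_s, and set φ₀ :=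 0. Then each φ_s with s ∈ (0,1] is a well-defined *-homomorphism of C₀(Ω, ℂ), φ₁ is the identity map, and for every x ∈ C₀(Ω, ℂ) the map [0,1] → C₀(Ω, ℂ), s ↦ φ_s(x), is continuous; in particular the identity of C₀(Ω, ℂ) is connected to the zero endomorphism through a pointwise norm-continuous path of *-homomorphisms. -/
/-- The extension of a self-map of `Ω` to the one-point (Alexandroff)
compactification, sending the point at infinity to itself. -/
def onePointExtend {Ω : Type*} (f : Ω → Ω) : OnePoint Ω → OnePoint Ω :=
  Option.map f

open Set Filter Topology

/-- Let `Ω` be a locally compact Hausdorff space and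
`(ϑ_s)_{s ∈ (0,1]}` a family of proper continuous self-maps of `Ω` such that the
jointly extended map `Ω* × (0,1] → Ω*` is continuous, `ϑ₁ = id`, and every compact
set is eventually missed by the ranges `ϑ_s(Ω)` as `s → 0`.  Then the maps
`φ_s : x ↦ x ∘ ϑ_s` (for `s ∈ (0,1]`) together with `φ₀ := 0` form a well-defined
pointwise norm-continuous path of *-homomorphisms of `C₀(Ω, ℂ)` from the identity
(`φ₁ = id`) to the zero endomorphism. -/
theorem stmt_19 {Ω : Type*} [TopologicalSpace Ω] [LocallyCompactSpace Ω] [T2Space Ω]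
    (ϑ : ℝ → Ω → Ω)
    (hproper : ∀ s ∈ Set.Ioc (0 : ℝ) 1, IsProperMap (ϑ s))
    (hcont : Continuous fun q : OnePoint Ω × (Set.Ioc (0 : ℝ) 1) =>
      onePointExtend (ϑ q.2) q.1)
    (hone : ∀ ω : Ω, ϑ 1 ω = ω)
    (hmiss : ∀ Γ : Set Ω, IsCompact Γ →
      ∃ ε ∈ Set.Ioc (0 : ℝ) 1, ∀ s ∈ Set.Ioo (0 : ℝ) ε, Γ ∩ Set.range (ϑ s) = ∅) :
    ∃ Φ : ℝ → ZeroAtInftyContinuousMap Ω ℂ → ZeroAtInftyContinuousMap Ω ℂ,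
      (∀ s ∈ Set.Ioc (0 : ℝ) 1, ∀ x, ∀ ω, Φ s x ω = x (ϑ s ω)) ∧
      (∀ x, Φ 0 x = 0) ∧
      (∀ s ∈ Set.Ioc (0 : ℝ) 1, ∀ x y, Φ s (x + y) = Φ s x + Φ s y) ∧
      (∀ s ∈ Set.Ioc (0 : ℝ) 1, ∀ x y, Φ s (x * y) = Φ s x * Φ s y) ∧
      (∀ s ∈ Set.Ioc (0 : ℝ) 1, ∀ x, Φ s (star x) = star (Φ s x)) ∧
      (∀ s ∈ Set.Ioc (0 : ℝ) 1, ∀ (c : ℂ) (x), Φ s (c • x) = c • Φ s x) ∧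
      (∀ x, Φ 1 x = x) ∧
      (∀ x, ContinuousOn (fun s => Φ s x) (Set.Icc 0 1)) := by
  classical
  -- the cocompact bundled map associated to `ϑ s`
  set θc : ∀ s, s ∈ Set.Ioc (0 : ℝ) 1 → CocompactMap Ω Ω := fun s hs =>
    ⟨⟨ϑ s, (hproper s hs).continuous⟩,
      CocompactMap.tendsto_of_forall_preimage fun _ hK =>
        (hproper s hs).isCompact_preimage hK⟩ with hθc
  set Φ : ℝ → ZeroAtInftyContinuousMap Ω ℂ → ZeroAtInftyContinuousMap Ω ℂ := fun s x =>
    if h : s ∈ Set.Ioc (0 : ℝ) 1 then x.comp (θc s h) else 0 with hΦ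
  have happly : ∀ s ∈ Set.Ioc (0 : ℝ) 1, ∀ x, ∀ ω, Φ s x ω = x (ϑ s ω) := by
    intro s hs x ω
    show (if h : s ∈ Set.Ioc (0 : ℝ) 1 then x.comp (θc s h) else 0) ω = x (ϑ s ω)
    rw [dif_pos hs]
    rfl
  have h0mem : (0 : ℝ) ∉ Set.Ioc (0 : ℝ) 1 := by simp
  have h1mem : (1 : ℝ) ∈ Set.Ioc (0 : ℝ) 1 := ⟨one_pos, le_refl 1⟩
  refine ⟨Φ, happly, ?_, ?_, ?_, ?_, ?_, ?_, ?_⟩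
  · intro x; simp [hΦ, dif_neg h0mem]
  · intro s hs x y; ext ω
    simp [happly s hs]
  · intro s hs x y; ext ω
    simp [happly s hs]
  · intro s hs x; ext ω
    simp [happly s hs]
  · intro s hs c x; ext ω
    simp [happly s hs]
  · intro x; ext ω
    simp [happly 1 h1mem, hone]
  · intro x
    -- the extension of `x` to the one-point compactification
    set xs : OnePoint Ω → ℂ := fun p => Option.elim p 0 x with hxs
    have hxsc : Continuous xs := by
      rw [OnePoint.continuous_iff]
      constructor
      · have : (fun ω : Ω => xs ↑ω) = x := rfl
        rw [this, OnePoint.infty, Filter.coclosedCompact_eq_cocompact]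
        exact zero_at_infty x
      · exact x.continuous
    set F : C(Set.Ioc (0 : ℝ) 1 × OnePoint Ω, ℂ) :=
      ⟨fun q => xs (onePointExtend (ϑ q.1) q.2),
        hxsc.comp (hcont.comp (continuous_snd.prodMk continuous_fst))⟩ with hF
    set G : C(Set.Ioc (0 : ℝ) 1, C(OnePoint Ω, ℂ)) := F.curry with hG
    set H : ℝ → C(OnePoint Ω, ℂ) := fun s =>
      if h : s ∈ Set.Ioc (0 : ℝ) 1 then G ⟨s, h⟩ else 0 with hH
    have hHcont : ContinuousOn H (Set.Ioc (0 : ℝ) 1) := by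
      rw [continuousOn_iff_continuous_restrict]
      have : (Set.Ioc (0 : ℝ) 1).domRestrict H = fun s => G s := by
        funext s
        show (if h : (s : ℝ) ∈ Set.Ioc (0 : ℝ) 1 then G ⟨s, h⟩ else 0) = G s
        rw [dif_pos s.2]
      rw [this]
      exact G.continuous
    have hHapply : ∀ s, ∀ hs : s ∈ Set.Ioc (0 : ℝ) 1, ∀ ω : Ω,
        Φ s x ω = H s (↑ω : OnePoint Ω) := by
      intro s hs ω
      rw [happly s hs]
      show x (ϑ s ω) = (if h : s ∈ Set.Ioc (0 : ℝ) 1 then G ⟨s, h⟩ else 0) (↑ω : OnePoint Ω)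
      rw [dif_pos hs]
      rfl
    have hdist : ∀ s, s ∈ Set.Ioc (0 : ℝ) 1 → ∀ s', s' ∈ Set.Ioc (0 : ℝ) 1 →
        dist (Φ s x) (Φ s' x) ≤ dist (H s) (H s') := by
      intro s hs s' hs'
      change dist (Φ s x).toBCF (Φ s' x).toBCF ≤ _
      rw [BoundedContinuousFunction.dist_le dist_nonneg]
      intro ω
      have h1 : (Φ s x).toBCF ω = H s (↑ω : OnePoint Ω) := hHapply s hs ω
      have h2 : (Φ s' x).toBCF ω = H s' (↑ω : OnePoint Ω) := hHapply s' hs' ω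
      rw [h1, h2]
      exact ContinuousMap.dist_apply_le_dist _
    intro s₀ hs₀
    rcases eq_or_lt_of_le hs₀.1 with h0 | h0
    · -- continuity at `0`
      subst h0
      rw [Metric.continuousWithinAt_iff]
      intro ε hε
      have hball : x ⁻¹' Metric.ball (0 : ℂ) (ε / 2) ∈ Filter.cocompact Ω :=
        zero_at_infty x (Metric.ball_mem_nhds _ (half_pos hε))
      obtain ⟨K, hKc, hKs⟩ := Filter.mem_cocompact.mp hball
      obtain ⟨ε', hε', hmiss'⟩ := hmiss K hKc
      refine ⟨ε', hε'.1, fun {s} hsI hsd => ?_⟩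
      rcases eq_or_lt_of_le hsI.1 with h0' | h0'
      · subst h0'; simpa using hε
      · have hsIoo : s ∈ Set.Ioo (0 : ℝ) ε' := by
          constructor
          · exact h0'
          · have := hsd
            rw [Real.dist_eq, sub_zero, abs_of_pos h0'] at this
            exact this
        have hsIoc : s ∈ Set.Ioc (0 : ℝ) 1 := ⟨h0', le_trans hsIoo.2.le hε'.2⟩
        have hzero : Φ 0 x = 0 := by simp [hΦ, dif_neg h0mem]
        rw [hzero, dist_zero_right]
        have hnorm : ‖Φ s x‖ ≤ ε / 2 := by
          change ‖(Φ s x).toBCF‖ ≤ ε / 2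
          rw [BoundedContinuousFunction.norm_le (half_pos hε).le]
          intro ω
          have hmem : ϑ s ω ∉ K := by
            intro hmem
            have : ϑ s ω ∈ K ∩ Set.range (ϑ s) := ⟨hmem, ⟨ω, rfl⟩⟩
            rw [hmiss' s hsIoo] at this
            exact this
          have : x (ϑ s ω) ∈ Metric.ball (0 : ℂ) (ε / 2) := hKs hmem
          have hb : ‖x (ϑ s ω)‖ < ε / 2 := by
            simpa [Metric.mem_ball, dist_zero_right] using this
          have heq : (Φ s x).toBCF ω = x (ϑ s ω) := happly s hsIoc x ω
          rw [heq]
          exact hb.le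
        exact lt_of_le_of_lt hnorm (half_lt_self hε)
    · -- continuity at `s₀ ∈ (0, 1]`
      have hs₀' : s₀ ∈ Set.Ioc (0 : ℝ) 1 := ⟨h0, hs₀.2⟩
      rw [Metric.continuousWithinAt_iff]
      intro ε hε
      obtain ⟨δ₁, hδ₁, hδ⟩ := Metric.continuousOn_iff.mp hHcont s₀ hs₀' ε hε
      refine ⟨min δ₁ s₀, lt_min hδ₁ h0, fun {s} hsI hsd => ?_⟩
      have hspos : 0 < s := by
        have h1 : dist s s₀ < s₀ := lt_of_lt_of_le hsd (min_le_right _ _)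
        rw [Real.dist_eq] at h1
        have := abs_lt.mp h1
        linarith [this.1]
      have hsIoc : s ∈ Set.Ioc (0 : ℝ) 1 := ⟨hspos, hsI.2⟩
      have h2 : dist (H s) (H s₀) < ε :=
        hδ s hsIoc (lt_of_lt_of_le hsd (min_le_left _ _))
      exact lt_of_le_of_lt (hdist s hsIoc s₀ hs₀') h2
end
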